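/- arXiv:0807.4051 — 11 statements merged into one kernel-verified Lean document; each statement's English description precedes it below -/
import Mathlib

section
/- Let p be a prime, A a commutative ring and 𝔞 ⊆ A an ideal such that A is 𝔞-adically complete and separated and A/𝔞 is a perfect ring of characteristic p. Then the ring homomorphism W(A) → W(A/𝔞) induced by the projection A → A/𝔞 admits a unique ring-homomorphism section s : W(A/𝔞) → W(A); moreover this section commutes with the Witt vector Frobenius, i.e. s ∘ f = f ∘ s. -/
open WittVector Function

namespace WittSec

variable {p : ℕ} [hp : Fact p.Prime]

section Naturality
variable {R S : Type*} [CommRing R] [CommRing S]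

theorem hom_aeval (g : R →+* S) (c : ℕ → R) (P : MvPolynomial ℕ ℤ) :
    g (MvPolynomial.aeval c P) = MvPolynomial.aeval (fun n => g (c n)) P := by
  rw [MvPolynomial.aeval_def, MvPolynomial.aeval_def, MvPolynomial.eval₂_comp_left]
  congr 1
  exact Subsingleton.elim _ _

theorem map_frob (g : R →+* S) (x : WittVector p R) :
    WittVector.map g (frobenius x) = frobenius (WittVector.map g x) := by
  apply WittVector.ext; intro n
  rw [map_coeff, coeff_frobenius, coeff_frobenius, hom_aeval]
  exact congrArg (fun c => MvPolynomial.aeval c (frobeniusPoly p n)) (funext fun k => (map_coeff g x k).symm)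

theorem frob_teichmuller {R : Type*} [CommRing R] (a : R) :
    frobenius (teichmuller p a) = teichmuller p (a ^ p) := by
  have key : ∀ b : MvPolynomial Unit ℤ,
      frobenius (teichmuller p b) = teichmuller p (b ^ p) := by
    intro b
    apply WittVector.map_injective (MvPolynomial.map (Int.castRingHom ℚ))
      (MvPolynomial.map_injective _ Int.cast_injective)
    rw [map_teichmuller, map_frob, map_teichmuller, map_pow]
    apply (ghostMap.bijective_of_invertible p (MvPolynomial Unit ℚ)).1
    funext n
    rw [ghostMap_apply, ghostMap_apply, ghostComponent_frobenius,
      ghostComponent_teichmuller, ghostComponent_teichmuller, ← pow_mul]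
    congr 1
    exact pow_succ' p n
  have h := congrArg (WittVector.map (MvPolynomial.aeval (fun _ : Unit => a)).toRingHom)
    (key (MvPolynomial.X ()))
  rw [map_frob, map_teichmuller, map_teichmuller] at h
  simpa using h

theorem exists_decomp {R : Type*} [CommRing R] (x : WittVector p R) :
    ∃ y : WittVector p R,
      (∀ i, y.coeff i = (x - teichmuller p (x.coeff 0)).coeff (i + 1)) ∧
      x = teichmuller p (x.coeff 0) + verschiebung y := by
  refine ⟨WittVector.mk p (fun i => (x - teichmuller p (x.coeff 0)).coeff (i + 1)),
    fun i => by rw [coeff_mk], ?_⟩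
  have h0 : (x - teichmuller p (x.coeff 0)).coeff 0 = 0 := by
    have := map_sub (WittVector.constantCoeff (p := p) (R := R)) x (teichmuller p (x.coeff 0))
    simpa [teichmuller_coeff_zero] using this
  have hV : verschiebung (WittVector.mk p
      (fun i => (x - teichmuller p (x.coeff 0)).coeff (i + 1))) = x - teichmuller p (x.coeff 0) := by
    apply WittVector.ext; intro n
    cases n with
    | zero => rw [verschiebung_coeff_zero, h0]
    | succ k => rw [verschiebung_coeff_succ, coeff_mk]
  rw [hV]; ring

end Naturality


section SquareZero

variable {R : Type*} [CommRing R]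

/-- All coefficients lie in the ideal `I`. -/
def MI (I : Ideal R) (x : WittVector p R) : Prop := ∀ i, x.coeff i ∈ I

theorem MI_iff (I : Ideal R) (x : WittVector p R) :
    MI I x ↔ WittVector.map (Ideal.Quotient.mk I) x = 0 := by
  rw [WittVector.ext_iff]
  exact forall_congr' fun i => by
    rw [map_coeff, zero_coeff, Ideal.Quotient.eq_zero_iff_mem]

theorem MI.sub {I : Ideal R} {x y : WittVector p R} (hx : MI I x) (hy : MI I y) :
    MI I (x - y) := by
  rw [MI_iff] at *
  rw [map_sub, hx, hy, sub_zero]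

theorem MI.mul_left {I : Ideal R} (w : WittVector p R) {x : WittVector p R} (hx : MI I x) :
    MI I (w * x) := by
  rw [MI_iff] at *
  rw [map_mul, hx, mul_zero]

theorem MI.frob {I : Ideal R} {x : WittVector p R} (hx : MI I x) : MI I (frobenius x) := by
  rw [MI_iff] at *
  rw [map_frob, hx, map_zero]

theorem MI.teich {I : Ideal R} {a : R} (ha : a ∈ I) : MI I (teichmuller p a) := by
  intro i
  cases i with
  | zero => rw [teichmuller_coeff_zero]; exact ha
  | succ k => rw [teichmuller_coeff_pos p _ (k+1) (Nat.succ_pos k)]; exact I.zero_mem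

theorem MI.decomp_aux {I : Ideal R} {x : WittVector p R} (hx : MI I x)
    {y : WittVector p R} (hy : ∀ i, y.coeff i = (x - teichmuller p (x.coeff 0)).coeff (i + 1)) :
    MI I y := by
  intro i
  rw [hy i]
  exact (hx.sub (MI.teich (hx 0))) (i + 1)

theorem teich_mul_eq (a : R) (ha : a * a = 0) (w : WittVector p R) :
    teichmuller p a * w = teichmuller p (a * w.coeff 0) := by
  obtain ⟨w', -, hw⟩ := exists_decomp w
  have hap : a ^ p = 0 := by
    have h2 : 2 ≤ p := hp.1.two_le
    calc a ^ p = a ^ 2 * a ^ (p - 2) := by rw [← pow_add]; congr 1; omega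
    _ = 0 := by rw [pow_two, ha, zero_mul]
  have hzero : teichmuller p a * verschiebung w' = 0 := by
    rw [mul_comm, ← verschiebung_mul_frobenius, frob_teichmuller, hap, teichmuller_zero,
      mul_zero, map_zero]
  conv_lhs => rw [hw]
  rw [mul_add, hzero, add_zero, ← MonoidHom.map_mul]

theorem mul_coeff_zero_of_MI (I : Ideal R) (hII : ∀ a ∈ I, ∀ b ∈ I, a * b = 0) :
    ∀ (k : ℕ) (x y : WittVector p R), MI I x → MI I y → (x * y).coeff k = 0 := by
  intro k
  induction k with
  | zero =>
    intro x y hx hy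
    rw [WittVector.mul_coeff_zero]
    exact hII _ (hx 0) _ (hy 0)
  | succ k ih =>
    intro x y hx hy
    obtain ⟨x', hco, hxd⟩ := exists_decomp x
    have hx' : MI I x' := hx.decomp_aux hco
    have key : x * y = verschiebung (x' * frobenius y) := by
      conv_lhs => rw [hxd]
      rw [add_mul, teich_mul_eq _ (hII _ (hx 0) _ (hx 0)) y, hII _ (hx 0) _ (hy 0),
        teichmuller_zero, zero_add, ← verschiebung_mul_frobenius]
    rw [key, verschiebung_coeff_succ]
    exact ih x' (frobenius y) hx' hy.frob

theorem mul_eq_zero_of_MI {I : Ideal R} (hII : ∀ a ∈ I, ∀ b ∈ I, a * b = 0)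
    {x y : WittVector p R} (hx : MI I x) (hy : MI I y) : x * y = 0 :=
  WittVector.ext fun k => by rw [mul_coeff_zero_of_MI I hII k x y hx hy, zero_coeff]

theorem p_mul_coeff_zero_of_MI (I : Ideal R) (hII : ∀ a ∈ I, ∀ b ∈ I, a * b = 0)
    (hpI : ∀ a ∈ I, (p : R) * a = 0) :
    ∀ (k : ℕ) (x : WittVector p R), MI I x → ((p : WittVector p R) * x).coeff k = 0 := by
  intro k
  induction k with
  | zero =>
    intro x hx
    rw [WittVector.mul_coeff_zero]
    have hc : ((p : WittVector p R)).coeff 0 = (p : R) :=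
      map_natCast (WittVector.constantCoeff (p := p) (R := R)) p
    rw [hc]
    exact hpI _ (hx 0)
  | succ k ih =>
    intro x hx
    obtain ⟨x', hco, hxd⟩ := exists_decomp x
    have hx' : MI I x' := hx.decomp_aux hco
    have hTp : teichmuller p (x.coeff 0) * (p : WittVector p R) = 0 := by
      rw [teich_mul_eq _ (hII _ (hx 0) _ (hx 0))]
      have hc : ((p : WittVector p R)).coeff 0 = (p : R) :=
        map_natCast (WittVector.constantCoeff (p := p) (R := R)) p
      rw [hc, mul_comm, hpI _ (hx 0), teichmuller_zero]
    have key : (p : WittVector p R) * x = verschiebung (x' * (p : WittVector p R)) := by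
      conv_lhs => rw [hxd]
      rw [mul_add, mul_comm _ (teichmuller p (x.coeff 0)), hTp, zero_add,
        mul_comm ((p : WittVector p R)) (verschiebung x'),
        ← verschiebung_mul_frobenius, map_natCast (frobenius : WittVector p R →+* WittVector p R)]
    rw [key, verschiebung_coeff_succ, mul_comm]
    exact ih x' hx'

theorem p_mul_eq_zero_of_MI {I : Ideal R} (hII : ∀ a ∈ I, ∀ b ∈ I, a * b = 0)
    (hpI : ∀ a ∈ I, (p : R) * a = 0) {x : WittVector p R} (hx : MI I x) :
    (p : WittVector p R) * x = 0 :=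
  WittVector.ext fun k => by rw [p_mul_coeff_zero_of_MI I hII hpI k x hx, zero_coeff]

theorem add_pow_p_of_MI {I : Ideal R} (hII : ∀ a ∈ I, ∀ b ∈ I, a * b = 0)
    (hpI : ∀ a ∈ I, (p : R) * a = 0) (x : WittVector p R) {d : WittVector p R} (hd : MI I d) :
    (x + d) ^ p = x ^ p := by
  rw [add_pow]
  rw [Finset.sum_eq_single p]
  · rw [Nat.sub_self, pow_zero, mul_one, Nat.choose_self, Nat.cast_one, mul_one]
  · intro k hk hne
    have hklt : k < p := by
      rw [Finset.mem_range] at hk; omega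
    rcases eq_or_ne k (p - 1) with rfl | hk2
    · have h1 : p - (p - 1) = 1 := by omega
      have h2 : p.choose (p - 1) = p := by
        rw [Nat.choose_symm (by omega : 1 ≤ p), Nat.choose_one_right]
      rw [h1, pow_one, h2]
      have : (p : WittVector p R) * (x ^ (p - 1) * d) = 0 :=
        p_mul_eq_zero_of_MI hII hpI (MI.mul_left _ hd)
      calc x ^ (p - 1) * d * (p : WittVector p R)
          = (p : WittVector p R) * (x ^ (p - 1) * d) := by ring
        _ = 0 := this
    · have h2 : 2 ≤ p - k := by omega
      have hdd : d ^ (p - k) = d ^ (p - k - 2) * (d * d) := by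
        rw [← pow_two, ← pow_add]
        congr 1
        omega
      rw [hdd, mul_eq_zero_of_MI hII hd hd, mul_zero, mul_zero, zero_mul]
  · intro h
    exact absurd (Finset.self_mem_range_succ p) h

end SquareZero


section Uniqueness

variable {B R : Type*} [CommRing B] [CommRing R] [CharP B p] [PerfectRing B p]

theorem section_step
    (I : Ideal R) (hII : ∀ a ∈ I, ∀ b ∈ I, a * b = 0)
    (hpI : ∀ a ∈ I, (p : R) * a = 0)
    (S S' : WittVector p B →+* WittVector p R)
    (h : ∀ y, WittVector.map (Ideal.Quotient.mk I) (S y) =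
      WittVector.map (Ideal.Quotient.mk I) (S' y)) :
    ∀ y, S y = S' y := by
  have hd : ∀ z, MI I (S z - S' z) := by
    intro z
    rw [MI_iff, map_sub, h z, sub_self]
  intro y
  obtain ⟨y', -, hyd⟩ := exists_decomp y
  set w := (frobeniusEquiv p B).symm y' with hw
  have hfw : frobenius w = y' := by
    have := (frobeniusEquiv p B).apply_symm_apply y'
    rwa [WittVector.frobeniusEquiv_apply] at this
  have hVy : verschiebung y' = w * (p : WittVector p B) := by
    rw [← hfw, verschiebung_frobenius]
  set b := (_root_.frobeniusEquiv B p).symm (y.coeff 0) with hb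
  have hbp : teichmuller p (y.coeff 0) = (teichmuller p b) ^ p := by
    rw [← MonoidHom.map_pow]
    congr 1
    have := frobenius_apply_frobeniusEquiv_symm B p (y.coeff 0)
    rw [frobenius_def] at this
    exact this.symm
  have hy2 : y = (teichmuller p b) ^ p + w * (p : WittVector p B) := by
    rw [hyd, hbp, hVy]
  have e1 : S y = (S (teichmuller p b)) ^ p + S w * (p : WittVector p R) := by
    rw [hy2, map_add, map_pow, map_mul, map_natCast]
  have e2 : S' y = (S' (teichmuller p b)) ^ p + S' w * (p : WittVector p R) := by
    rw [hy2, map_add, map_pow, map_mul, map_natCast]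
  have hpow : (S (teichmuller p b)) ^ p = (S' (teichmuller p b)) ^ p := by
    have : S (teichmuller p b) = S' (teichmuller p b) + (S (teichmuller p b) - S' (teichmuller p b)) := by
      ring
    rw [this, add_pow_p_of_MI hII hpI _ (hd (teichmuller p b))]
  have hmul : S w * (p : WittVector p R) = S' w * (p : WittVector p R) := by
    have h0 : (p : WittVector p R) * (S w - S' w) = 0 :=
      p_mul_eq_zero_of_MI hII hpI (hd w)
    have : S w * (p : WittVector p R) - S' w * (p : WittVector p R)
        = (p : WittVector p R) * (S w - S' w) := by ring
    have h1 : S w * (p : WittVector p R) - S' w * (p : WittVector p R) = 0 := by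
      rw [this, h0]
    exact sub_eq_zero.mp h1
  rw [e1, e2, hpow, hmul]

end Uniqueness


section Congruence

variable {A : Type*} [CommRing A] (𝔞 : Ideal A)

theorem pow_p_sub_mem (hpa : (p : A) ∈ 𝔞) {k : ℕ} (hk : k ≠ 0) {a b : A}
    (h : a - b ∈ 𝔞 ^ k) : a ^ p - b ^ p ∈ 𝔞 ^ (k + 1) := by
  have hgeom : (∑ i ∈ Finset.range p, a ^ i * b ^ (p - 1 - i)) * (a - b) = a ^ p - b ^ p :=
    geom_sum₂_mul a b p
  rw [← hgeom]
  have hsum : (∑ i ∈ Finset.range p, a ^ i * b ^ (p - 1 - i)) ∈ 𝔞 := by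
    have hterm : ∀ i ∈ Finset.range p,
        a ^ i * b ^ (p - 1 - i) - a ^ i * a ^ (p - 1 - i) ∈ 𝔞 := by
      intro i _
      rw [← mul_sub]
      apply Ideal.pow_le_self hk
      apply Ideal.mul_mem_left
      obtain ⟨c, hc⟩ := sub_dvd_pow_sub_pow b a (p - 1 - i)
      rw [hc]
      apply Ideal.mul_mem_right
      have : b - a = -(a - b) := by ring
      rw [this]
      exact neg_mem h
    have hsplit : (∑ i ∈ Finset.range p, a ^ i * b ^ (p - 1 - i)) =
        (∑ i ∈ Finset.range p, (a ^ i * b ^ (p - 1 - i) - a ^ i * a ^ (p - 1 - i)))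
        + ∑ i ∈ Finset.range p, a ^ i * a ^ (p - 1 - i) := by
      rw [← Finset.sum_add_distrib]
      congr 1
      funext i
      ring
    rw [hsplit]
    refine Ideal.add_mem _ (Ideal.sum_mem _ hterm) ?_
    have hconst : ∀ i ∈ Finset.range p, a ^ i * a ^ (p - 1 - i) = a ^ (p - 1) := by
      intro i hi
      rw [Finset.mem_range] at hi
      rw [← pow_add]
      congr 1
      omega
    rw [Finset.sum_congr rfl hconst, Finset.sum_const, Finset.card_range, nsmul_eq_mul]
    exact Ideal.mul_mem_right _ _ hpa
  have hmul := Ideal.mul_mem_mul hsum h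
  rwa [← pow_succ'] at hmul

theorem aeval_sub_mem (J : Ideal A) {c c' : ℕ → A} (h : ∀ i, c i - c' i ∈ J)
    (P : MvPolynomial ℕ ℤ) : MvPolynomial.aeval c P - MvPolynomial.aeval c' P ∈ J := by
  rw [← Ideal.Quotient.mk_eq_mk_iff_sub_mem]
  rw [hom_aeval, hom_aeval]
  exact congrArg (fun c0 => MvPolynomial.aeval c0 P)
    (funext fun i => (Ideal.Quotient.mk_eq_mk_iff_sub_mem _ _).2 (h i))

theorem frob_coeff_congr (hpa : (p : A) ∈ 𝔞) {k : ℕ} (hk : k ≠ 0) {x y : WittVector p A}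
    (h : ∀ i, x.coeff i - y.coeff i ∈ 𝔞 ^ k) (n : ℕ) :
    (frobenius x).coeff n - (frobenius y).coeff n ∈ 𝔞 ^ (k + 1) := by
  rw [coeff_frobenius, coeff_frobenius]
  have hfp : frobeniusPoly p n
      = MvPolynomial.X n ^ p + MvPolynomial.C (p : ℤ) * frobeniusPolyAux p n := rfl
  rw [hfp]
  simp only [map_add, map_mul, map_pow, MvPolynomial.aeval_X, MvPolynomial.aeval_C]
  have halg : (algebraMap ℤ A) ((p : ℕ) : ℤ) = ((p : ℕ) : A) := by
    simp
  rw [halg]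
  have hre : (x.coeff n ^ p + (p : A) * (MvPolynomial.aeval x.coeff) (frobeniusPolyAux p n))
      - (y.coeff n ^ p + (p : A) * (MvPolynomial.aeval y.coeff) (frobeniusPolyAux p n))
      = (x.coeff n ^ p - y.coeff n ^ p)
        + (p : A) * ((MvPolynomial.aeval x.coeff) (frobeniusPolyAux p n)
            - (MvPolynomial.aeval y.coeff) (frobeniusPolyAux p n)) := by
    ring
  rw [hre]
  refine Ideal.add_mem _ (pow_p_sub_mem 𝔞 hpa hk (h n)) ?_
  have hmem := aeval_sub_mem (𝔞 ^ k) (fun i => h i) (frobeniusPolyAux p n)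
  have hmul := Ideal.mul_mem_mul hpa hmem
  rwa [← pow_succ'] at hmul

end Congruence


section Existence

variable {A : Type*} [CommRing A] (𝔞 : Ideal A)

/-- congruence of Witt vectors: all coefficients congruent mod `𝔞 ^ k`. -/
def Cg (k : ℕ) (x y : WittVector p A) : Prop := ∀ i, x.coeff i - y.coeff i ∈ 𝔞 ^ k

omit hp in
theorem Cg.mono {k m : ℕ} (h : k ≤ m) {x y : WittVector p A} (hc : Cg 𝔞 m x y) :
    Cg 𝔞 k x y := fun i => Ideal.pow_le_pow_right h (hc i)

omit hp in
theorem Cg.refl (k : ℕ) (x : WittVector p A) : Cg 𝔞 k x x := fun i => by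
  simp

omit hp in
theorem Cg.symm {k : ℕ} {x y : WittVector p A} (h : Cg 𝔞 k x y) : Cg 𝔞 k y x := fun i => by
  have := neg_mem (h i)
  simpa using this

omit hp in
theorem Cg.trans {k : ℕ} {x y z : WittVector p A} (h1 : Cg 𝔞 k x y) (h2 : Cg 𝔞 k y z) :
    Cg 𝔞 k x z := fun i => by
  have := add_mem (h1 i) (h2 i)
  simpa using this

theorem cg_iff (k : ℕ) (x y : WittVector p A) :
    Cg 𝔞 k x y ↔ WittVector.map (Ideal.Quotient.mk (𝔞 ^ k)) x
      = WittVector.map (Ideal.Quotient.mk (𝔞 ^ k)) y := by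
  rw [WittVector.ext_iff]
  exact forall_congr' fun i => by
    rw [map_coeff, map_coeff, Ideal.Quotient.mk_eq_mk_iff_sub_mem]

theorem cg_one_iff (x y : WittVector p A) :
    Cg 𝔞 1 x y ↔ WittVector.map (Ideal.Quotient.mk 𝔞) x
      = WittVector.map (Ideal.Quotient.mk 𝔞) y := by
  rw [WittVector.ext_iff]
  refine forall_congr' fun i => ?_
  rw [map_coeff, map_coeff, Ideal.Quotient.mk_eq_mk_iff_sub_mem, pow_one]

theorem cg_frob_iter (hpa : (p : A) ∈ 𝔞) (n : ℕ) {k : ℕ} (hk : k ≠ 0)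
    {x y : WittVector p A} (h : Cg 𝔞 k x y) :
    Cg 𝔞 (k + n) (frobenius^[n] x) (frobenius^[n] y) := by
  induction n with
  | zero => simpa using h
  | succ n ih =>
    rw [iterate_succ_apply', iterate_succ_apply']
    have := fun i => frob_coeff_congr 𝔞 hpa (k := k + n) (by omega) ih i
    intro i
    have hkn : k + (n + 1) = (k + n) + 1 := by omega
    rw [hkn]
    exact this i

theorem cg_haus [IsAdicComplete 𝔞 A] {x y : WittVector p A} (h : ∀ k, Cg 𝔞 k x y) :
    x = y := by
  apply WittVector.ext
  intro i
  have h0 : x.coeff i - y.coeff i = 0 := by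
    refine IsHausdorff.haus (IsAdicComplete.toIsHausdorff (I := 𝔞) (M := A)) _ fun n => ?_
    rw [SModEq.sub_mem, sub_zero, smul_eq_mul, Ideal.mul_top]
    exact h n i
  exact sub_eq_zero.mp h0

theorem cg_limit [IsAdicComplete 𝔞 A] (c : ℕ → WittVector p A)
    (hc : ∀ n, Cg 𝔞 (n + 1) (c (n + 1)) (c n)) : ∃ x, ∀ n, Cg 𝔞 n x (c n) := by
  have hchain : ∀ m n, m ≤ n → Cg 𝔞 m (c n) (c m) := by
    intro m n h
    induction h with
    | refl => exact Cg.refl 𝔞 m (c m)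
    | @step j hj ih =>
      exact Cg.trans 𝔞 (Cg.mono 𝔞 (Nat.le_succ_of_le hj) (hc j)) ih
  have key : ∀ i : ℕ, ∃ L : A, ∀ n, (c n).coeff i - L ∈ 𝔞 ^ n := by
    intro i
    obtain ⟨L, hL⟩ := IsPrecomplete.prec (IsAdicComplete.toIsPrecomplete (I := 𝔞) (M := A))
      (f := fun n => (c n).coeff i) (by
        intro m n hmn
        rw [SModEq.sub_mem, smul_eq_mul, Ideal.mul_top]
        have := (hchain m n hmn i)
        simpa using neg_mem this)
    refine ⟨L, fun n => ?_⟩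
    have := hL n
    rwa [SModEq.sub_mem, smul_eq_mul, Ideal.mul_top] at this
  choose L hL using key
  refine ⟨WittVector.mk p L, fun n i => ?_⟩
  rw [coeff_mk]
  simpa using neg_mem (hL i n)

end Existence


section IterHelpers

theorem iter_add {M : Type*} [Add M] {g : M → M} (hg : ∀ a b, g (a + b) = g a + g b)
    (n : ℕ) (a b : M) : g^[n] (a + b) = g^[n] a + g^[n] b := by
  induction n with
  | zero => simp
  | succ n ih =>
    rw [iterate_succ_apply', iterate_succ_apply', iterate_succ_apply', ih, hg]

theorem iter_mul {M : Type*} [Mul M] {g : M → M} (hg : ∀ a b, g (a * b) = g a * g b)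
    (n : ℕ) (a b : M) : g^[n] (a * b) = g^[n] a * g^[n] b := by
  induction n with
  | zero => simp
  | succ n ih =>
    rw [iterate_succ_apply', iterate_succ_apply', iterate_succ_apply', ih, hg]

theorem iter_one {M : Type*} [One M] {g : M → M} (hg : g 1 = 1) (n : ℕ) :
    g^[n] (1 : M) = 1 := by
  induction n with
  | zero => simp
  | succ n ih => rw [iterate_succ_apply', ih, hg]

theorem iter_zero {M : Type*} [Zero M] {g : M → M} (hg : g 0 = 0) (n : ℕ) :
    g^[n] (0 : M) = 0 := by
  induction n with
  | zero => simp
  | succ n ih => rw [iterate_succ_apply', ih, hg]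

end IterHelpers

section CgOps

variable {A : Type*} [CommRing A] (𝔞 : Ideal A)

theorem Cg.add {k : ℕ} {x x' y y' : WittVector p A} (hx : Cg 𝔞 k x x') (hy : Cg 𝔞 k y y') :
    Cg 𝔞 k (x + y) (x' + y') := by
  rw [cg_iff] at *
  rw [map_add, map_add, hx, hy]

theorem Cg.mul {k : ℕ} {x x' y y' : WittVector p A} (hx : Cg 𝔞 k x x') (hy : Cg 𝔞 k y y') :
    Cg 𝔞 k (x * y) (x' * y') := by
  rw [cg_iff] at *
  rw [map_mul, map_mul, hx, hy]

end CgOps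

section Construct

variable {A : Type*} [CommRing A] (𝔞 : Ideal A) [IsAdicComplete 𝔞 A]
  [CharP (A ⧸ 𝔞) p] [PerfectRing (A ⧸ 𝔞) p]

theorem exists_section (hpa : (p : A) ∈ 𝔞) :
    ∃ s : WittVector p (A ⧸ 𝔞) →+* WittVector p A,
      (WittVector.map (Ideal.Quotient.mk 𝔞)).comp s = RingHom.id _ := by
  classical
  obtain ⟨σ, hσ⟩ : ∃ σ : A ⧸ 𝔞 → A, ∀ b, Ideal.Quotient.mk 𝔞 (σ b) = b :=
    ⟨surjInv Ideal.Quotient.mk_surjective, fun b => surjInv_eq _ b⟩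
  set ℓ : WittVector p (A ⧸ 𝔞) → WittVector p A :=
    fun z => WittVector.mk p fun n => σ (z.coeff n) with hldef
  have hℓ : ∀ z, WittVector.map (Ideal.Quotient.mk 𝔞) (ℓ z) = z := by
    intro z
    apply WittVector.ext
    intro n
    rw [map_coeff, hldef, coeff_mk]
    exact hσ _
  set e := WittVector.frobeniusEquiv p (A ⧸ 𝔞) with hedef
  have hfe : ∀ w : WittVector p (A ⧸ 𝔞), frobenius w = e w := by
    intro w
    rw [hedef, WittVector.frobeniusEquiv_apply]
  set c : WittVector p (A ⧸ 𝔞) → ℕ → WittVector p A :=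
    fun y n => frobenius^[n] (ℓ (e.symm^[n] y)) with hcdef
  have happrox : ∀ (y : WittVector p (A ⧸ 𝔞)) (n : ℕ) (z : WittVector p A),
      WittVector.map (Ideal.Quotient.mk 𝔞) z = e.symm^[n] y →
      Cg 𝔞 (n + 1) (c y n) (frobenius^[n] z) := by
    intro y n z hz
    have h1 : Cg 𝔞 1 (ℓ (e.symm^[n] y)) z := by
      rw [cg_one_iff, hℓ, hz]
    have h2 := cg_frob_iter 𝔞 hpa n (k := 1) one_ne_zero h1
    have h3 : 1 + n = n + 1 := by omega
    rw [h3] at h2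
    exact h2
  have hCauchy : ∀ y n, Cg 𝔞 (n + 1) (c y (n + 1)) (c y n) := by
    intro y n
    have hz : WittVector.map (Ideal.Quotient.mk 𝔞) (frobenius (ℓ (e.symm^[n + 1] y)))
        = e.symm^[n] y := by
      rw [map_frob, hℓ, hfe, iterate_succ_apply', RingEquiv.apply_symm_apply]
    have := happrox y n _ hz
    have hc1 : c y (n + 1) = frobenius^[n] (frobenius (ℓ (e.symm^[n + 1] y))) := by
      rw [hcdef]
      simp only []
      rw [iterate_succ_apply]
    rw [← hc1] at this
    exact Cg.symm 𝔞 this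
  choose s0 hs0 using fun y => cg_limit 𝔞 (c y) (hCauchy y)
  have hkey : ∀ (y : WittVector p (A ⧸ 𝔞)) (n : ℕ) (z : WittVector p A),
      WittVector.map (Ideal.Quotient.mk 𝔞) z = e.symm^[n] y →
      Cg 𝔞 n (s0 y) (frobenius^[n] z) := by
    intro y n z hz
    exact Cg.trans 𝔞 (hs0 y n) (Cg.mono 𝔞 (Nat.le_succ n) (happrox y n z hz))
  have hFadd : ∀ (n : ℕ) (a b : WittVector p A),
      frobenius^[n] (a + b) = frobenius^[n] a + frobenius^[n] b :=
    fun n => iter_add (fun a b => map_add (frobenius : WittVector p A →+* WittVector p A) a b) n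
  have hFmul : ∀ (n : ℕ) (a b : WittVector p A),
      frobenius^[n] (a * b) = frobenius^[n] a * frobenius^[n] b :=
    fun n => iter_mul (fun a b => map_mul (frobenius : WittVector p A →+* WittVector p A) a b) n
  have hF1 : ∀ n : ℕ, frobenius^[n] (1 : WittVector p A) = 1 :=
    iter_one (map_one (frobenius : WittVector p A →+* WittVector p A))
  have hF0 : ∀ n : ℕ, frobenius^[n] (0 : WittVector p A) = 0 :=
    iter_zero (map_zero (frobenius : WittVector p A →+* WittVector p A))
  have hEadd : ∀ (n : ℕ) (a b : WittVector p (A ⧸ 𝔞)),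
      e.symm^[n] (a + b) = e.symm^[n] a + e.symm^[n] b :=
    fun n => iter_add (fun a b => map_add e.symm a b) n
  have hEmul : ∀ (n : ℕ) (a b : WittVector p (A ⧸ 𝔞)),
      e.symm^[n] (a * b) = e.symm^[n] a * e.symm^[n] b :=
    fun n => iter_mul (fun a b => map_mul e.symm a b) n
  have hE1 : ∀ n : ℕ, e.symm^[n] (1 : WittVector p (A ⧸ 𝔞)) = 1 :=
    iter_one (map_one e.symm)
  have hE0 : ∀ n : ℕ, e.symm^[n] (0 : WittVector p (A ⧸ 𝔞)) = 0 :=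
    iter_zero (map_zero e.symm)
  have hadd : ∀ x y, s0 (x + y) = s0 x + s0 y := by
    intro x y
    apply cg_haus 𝔞
    intro k
    have h1 : Cg 𝔞 k (s0 (x + y)) (frobenius^[k] (ℓ (e.symm^[k] x) + ℓ (e.symm^[k] y))) := by
      apply hkey
      rw [map_add, hℓ, hℓ, hEadd]
    have h2 : Cg 𝔞 k (s0 x + s0 y) (frobenius^[k] (ℓ (e.symm^[k] x)) + frobenius^[k] (ℓ (e.symm^[k] y))) := by
      exact Cg.add 𝔞 (hkey x k _ (hℓ _)) (hkey y k _ (hℓ _))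
    rw [← hFadd] at h2
    exact Cg.trans 𝔞 h1 (Cg.symm 𝔞 h2)
  have hmul : ∀ x y, s0 (x * y) = s0 x * s0 y := by
    intro x y
    apply cg_haus 𝔞
    intro k
    have h1 : Cg 𝔞 k (s0 (x * y)) (frobenius^[k] (ℓ (e.symm^[k] x) * ℓ (e.symm^[k] y))) := by
      apply hkey
      rw [map_mul, hℓ, hℓ, hEmul]
    have h2 : Cg 𝔞 k (s0 x * s0 y) (frobenius^[k] (ℓ (e.symm^[k] x)) * frobenius^[k] (ℓ (e.symm^[k] y))) := by
      exact Cg.mul 𝔞 (hkey x k _ (hℓ _)) (hkey y k _ (hℓ _))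
    rw [← hFmul] at h2
    exact Cg.trans 𝔞 h1 (Cg.symm 𝔞 h2)
  have hone : s0 1 = 1 := by
    apply cg_haus 𝔞
    intro k
    have h1 : Cg 𝔞 k (s0 1) (frobenius^[k] (1 : WittVector p A)) := by
      apply hkey
      rw [map_one, hE1]
    rw [hF1] at h1
    exact h1
  have hzero : s0 0 = 0 := by
    apply cg_haus 𝔞
    intro k
    have h1 : Cg 𝔞 k (s0 0) (frobenius^[k] (0 : WittVector p A)) := by
      apply hkey
      rw [map_zero, hE0]
    rw [hF0] at h1
    exact h1
  let s : WittVector p (A ⧸ 𝔞) →+* WittVector p A :=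
    { toFun := s0
      map_one' := hone
      map_mul' := hmul
      map_zero' := hzero
      map_add' := hadd }
  refine ⟨s, ?_⟩
  apply RingHom.ext
  intro y
  show WittVector.map (Ideal.Quotient.mk 𝔞) (s0 y) = y
  have h1 : Cg 𝔞 1 (s0 y) (c y 1) := hs0 y 1
  rw [cg_one_iff] at h1
  rw [h1]
  have hc1 : c y 1 = frobenius (ℓ (e.symm y)) := by
    simp [hcdef]
  rw [hc1, map_frob, hℓ, hfe, RingEquiv.apply_symm_apply]
end Construct



section Main

variable {A : Type*} [CommRing A] (𝔞 : Ideal A) [IsAdicComplete 𝔞 A]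
  [CharP (A ⧸ 𝔞) p] [PerfectRing (A ⧸ 𝔞) p]

theorem section_unique (hpa : (p : A) ∈ 𝔞)
    (t t' : WittVector p (A ⧸ 𝔞) →+* WittVector p A)
    (ht : (WittVector.map (Ideal.Quotient.mk 𝔞)).comp t = RingHom.id _)
    (ht' : (WittVector.map (Ideal.Quotient.mk 𝔞)).comp t' = RingHom.id _) :
    t = t' := by
  have P : ∀ n : ℕ, ∀ y, WittVector.map (Ideal.Quotient.mk (𝔞 ^ (n + 1))) (t y)
      = WittVector.map (Ideal.Quotient.mk (𝔞 ^ (n + 1))) (t' y) := by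
    intro n
    induction n with
    | zero =>
      intro y
      refine (cg_iff 𝔞 1 _ _).1 ?_
      rw [cg_one_iff]
      have h1 := RingHom.congr_fun ht y
      have h2 := RingHom.congr_fun ht' y
      simp only [RingHom.coe_comp, Function.comp_apply, RingHom.id_apply] at h1 h2
      rw [h1, h2]
    | succ n ih =>
      set I : Ideal (A ⧸ 𝔞 ^ (n + 2)) :=
        Ideal.map (Ideal.Quotient.mk (𝔞 ^ (n + 2))) (𝔞 ^ (n + 1)) with hIdef
      have hsurj : Function.Surjective (Ideal.Quotient.mk (𝔞 ^ (n + 2))) :=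
        Ideal.Quotient.mk_surjective
      have hmem : ∀ a ∈ I, ∃ a' ∈ 𝔞 ^ (n + 1), Ideal.Quotient.mk (𝔞 ^ (n + 2)) a' = a := by
        intro a ha
        rw [hIdef, Ideal.mem_map_iff_of_surjective _ hsurj] at ha
        obtain ⟨a', ha', rfl⟩ := ha
        exact ⟨a', ha', rfl⟩
      have hII : ∀ a ∈ I, ∀ b ∈ I, a * b = 0 := by
        intro a ha b hb
        obtain ⟨a', ha', rfl⟩ := hmem a ha
        obtain ⟨b', hb', rfl⟩ := hmem b hb
        rw [← map_mul, Ideal.Quotient.eq_zero_iff_mem]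
        have h1 : a' * b' ∈ 𝔞 ^ (n + 1) * 𝔞 ^ (n + 1) := Ideal.mul_mem_mul ha' hb'
        rw [← pow_add] at h1
        exact Ideal.pow_le_pow_right (by omega) h1
      have hpI : ∀ a ∈ I, (p : A ⧸ 𝔞 ^ (n + 2)) * a = 0 := by
        intro a ha
        obtain ⟨a', ha', rfl⟩ := hmem a ha
        rw [← map_natCast (Ideal.Quotient.mk (𝔞 ^ (n + 2))) p, ← map_mul,
          Ideal.Quotient.eq_zero_iff_mem]
        have h1 : (p : A) * a' ∈ 𝔞 * 𝔞 ^ (n + 1) := Ideal.mul_mem_mul hpa ha'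
        rwa [← pow_succ'] at h1
      have hcomp : ∀ y, WittVector.map (Ideal.Quotient.mk I)
          ((WittVector.map (Ideal.Quotient.mk (𝔞 ^ (n + 2)))).comp t y)
          = WittVector.map (Ideal.Quotient.mk I)
          ((WittVector.map (Ideal.Quotient.mk (𝔞 ^ (n + 2)))).comp t' y) := by
        intro y
        have hcg : Cg 𝔞 (n + 1) (t y) (t' y) := (cg_iff 𝔞 (n + 1) _ _).2 (ih y)
        apply WittVector.ext
        intro i
        simp only [RingHom.coe_comp, Function.comp_apply, map_coeff]
        rw [Ideal.Quotient.mk_eq_mk_iff_sub_mem, ← map_sub]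
        exact Ideal.mem_map_of_mem _ (hcg i)
      have := section_step I hII hpI
        ((WittVector.map (Ideal.Quotient.mk (𝔞 ^ (n + 2)))).comp t)
        ((WittVector.map (Ideal.Quotient.mk (𝔞 ^ (n + 2)))).comp t') hcomp
      intro y
      simpa using this y
  apply RingHom.ext
  intro y
  apply cg_haus 𝔞
  intro k
  cases k with
  | zero =>
    intro i
    simp [Ideal.one_eq_top]
  | succ k =>
    exact (cg_iff 𝔞 (k + 1) _ _).2 (P k y)

end Main

end WittSec

/-- Let `p` be a prime, `A` a commutative ring and `𝔞 ⊆ A` an ideal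
such that `A` is `𝔞`-adically complete and separated and `A/𝔞` is a perfect ring of
characteristic `p`.  Then the ring homomorphism `W(A) → W(A/𝔞)` induced by the
projection admits a unique ring-homomorphism section `s`, and this section commutes
with the Witt vector Frobenius. -/
theorem witt_section_of_quotient_perfect
    (p : ℕ) [Fact p.Prime] (A : Type*) [CommRing A] (𝔞 : Ideal A)
    [IsAdicComplete 𝔞 A] [CharP (A ⧸ 𝔞) p] [PerfectRing (A ⧸ 𝔞) p] :
    (∃! s : WittVector p (A ⧸ 𝔞) →+* WittVector p A,
        (WittVector.map (Ideal.Quotient.mk 𝔞)).comp s = RingHom.id _) ∧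
    (∀ s : WittVector p (A ⧸ 𝔞) →+* WittVector p A,
        (WittVector.map (Ideal.Quotient.mk 𝔞)).comp s = RingHom.id _ →
        s.comp WittVector.frobenius = (WittVector.frobenius).comp s) := by
  have hpa : (p : A) ∈ 𝔞 := by
    have h0 : ((p : ℕ) : A ⧸ 𝔞) = 0 := CharP.cast_eq_zero _ p
    rwa [← map_natCast (Ideal.Quotient.mk 𝔞), Ideal.Quotient.eq_zero_iff_mem] at h0
  obtain ⟨s, hs⟩ := WittSec.exists_section 𝔞 hpa
  constructor
  · exact ⟨s, hs, fun t ht => WittSec.section_unique 𝔞 hpa t s ht hs⟩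
  · intro t ht
    set e := WittVector.frobeniusEquiv p (A ⧸ 𝔞) with hedef
    have hfe : ∀ w : WittVector p (A ⧸ 𝔞), WittVector.frobenius w = e w := by
      intro w
      rw [hedef, WittVector.frobeniusEquiv_apply]
    set t' : WittVector p (A ⧸ 𝔞) →+* WittVector p A :=
      (WittVector.frobenius).comp (t.comp e.symm.toRingHom) with ht'def
    have ht'sec : (WittVector.map (Ideal.Quotient.mk 𝔞)).comp t' = RingHom.id _ := by
      apply RingHom.ext
      intro y
      show WittVector.map (Ideal.Quotient.mk 𝔞)
        (WittVector.frobenius (t (e.symm y))) = y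
      rw [WittSec.map_frob]
      have h1 := RingHom.congr_fun ht (e.symm y)
      simp only [RingHom.coe_comp, Function.comp_apply, RingHom.id_apply] at h1
      rw [h1, hfe, RingEquiv.apply_symm_apply]
    have heq : t' = t := WittSec.section_unique 𝔞 hpa t' t ht'sec ht
    apply RingHom.ext
    intro z
    have h2 := RingHom.congr_fun heq (e z)
    simp only [ht'def, RingHom.coe_comp, Function.comp_apply, RingEquiv.toRingHom_eq_coe,
      RingEquiv.coe_toRingHom, RingEquiv.symm_apply_apply] at h2
    show t (WittVector.frobenius z) = WittVector.frobenius (t z)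
    rw [hfe, h2]
end

section
/- Let p be a prime, A a commutative ring and 𝔞 ⊆ A a nilpotent ideal (𝔞^N = 0 for some N). Then the set Ŵ(𝔞) of Witt vectors x ∈ W(A) such that every component of x lies in 𝔞 and all but finitely many components of x are zero is an ideal of W(A); in particular it is closed under addition. -/
open Finset MvPolynomial

namespace WittHatAux

variable {p : ℕ} [hp : Fact p.Prime]

lemma ghost_nat {R S : Type*} [CommRing R] [CommRing S] (f : R →+* S)
    (x : WittVector p R) (n : ℕ) :
    WittVector.ghostComponent n (WittVector.map f x) = f (WittVector.ghostComponent n x) := by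
  rw [WittVector.ghostComponent_apply, WittVector.ghostComponent_apply,
    aeval_wittPolynomial, aeval_wittPolynomial, map_sum]
  refine Finset.sum_congr rfl fun i _ => ?_
  rw [WittVector.map_coeff, map_mul, map_pow, map_pow, map_natCast]

lemma ghost_inj {σ : Type*} {x y : WittVector p (MvPolynomial σ ℤ)}
    (h : ∀ n, WittVector.ghostComponent n x = WittVector.ghostComponent n y) : x = y := by
  have hf : Function.Injective (MvPolynomial.map (Int.castRingHom ℚ) :
      MvPolynomial σ ℤ → MvPolynomial σ ℚ) :=
    MvPolynomial.map_injective _ Int.cast_injective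
  apply WittVector.map_injective _ hf (p := p)
  letI : Invertible (p : ℚ) :=
    invertibleOfNonzero (by exact_mod_cast hp.out.ne_zero)
  apply (WittVector.ghostMap.bijective_of_invertible p (MvPolynomial σ ℚ)).injective
  funext n
  rw [WittVector.ghostMap_apply, WittVector.ghostMap_apply, ghost_nat, ghost_nat, h n]

lemma coeff_iterate_verschiebung_teichmuller {A : Type*} [CommRing A] (a : A) (i n : ℕ) :
    ((WittVector.verschiebung (p := p))^[i] (WittVector.teichmuller p a)).coeff n
      = if n = i then a else 0 := by
  induction i generalizing n with
  | zero =>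
    cases n with
    | zero => simpa using WittVector.teichmuller_coeff_zero p a
    | succ k => simpa using WittVector.teichmuller_coeff_pos p a (k+1) (Nat.succ_pos k)
  | succ i ih =>
    rw [Function.iterate_succ_apply']
    cases n with
    | zero => simp [WittVector.verschiebung_coeff_zero]
    | succ k =>
      rw [WittVector.verschiebung_coeff_succ, ih]
      simp [Nat.succ_inj]

lemma coeff_iterate_verschiebung {A : Type*} [CommRing A] (x : WittVector p A) (i n : ℕ) :
    ((WittVector.verschiebung (p := p))^[i] x).coeff n
      = if i ≤ n then x.coeff (n - i) else 0 := by
  induction i generalizing n with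
  | zero => simp
  | succ i ih =>
    rw [Function.iterate_succ_apply']
    cases n with
    | zero =>
      simp [WittVector.verschiebung_coeff_zero]
    | succ k =>
      rw [WittVector.verschiebung_coeff_succ, ih]
      by_cases h : i ≤ k
      · rw [if_pos h, if_pos (Nat.succ_le_succ h), Nat.succ_sub_succ]
      · rw [if_neg h, if_neg (fun hc => h (Nat.le_of_succ_le_succ hc))]

lemma sum_V_teich {A : Type*} [CommRing A] (a : ℕ → A) (m : ℕ) :
    (∑ i ∈ Finset.range m, (WittVector.verschiebung (p := p))^[i] (WittVector.teichmuller p (a i)))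
      = WittVector.mk p (fun n => if n < m then a n else 0) := by
  induction m with
  | zero =>
    ext n
    simp [WittVector.zero_coeff, WittVector.coeff_mk]
  | succ m ih =>
    rw [Finset.sum_range_succ, ih]
    ext n
    rw [WittVector.coeff_add_of_disjoint]
    · simp only [WittVector.coeff_mk, coeff_iterate_verschiebung_teichmuller]
      rcases lt_trichotomy n m with h | h | h
      · rw [if_pos h, if_neg h.ne, if_pos (by omega), add_zero]
      · subst h
        simp
      · rw [if_neg (by omega), if_neg (by omega), if_neg (by omega), add_zero]
    · intro k
      rw [WittVector.coeff_mk, coeff_iterate_verschiebung_teichmuller]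
      by_cases h : k < m
      · right; rw [if_neg h.ne]
      · left; rw [if_neg h]

/-- The key multiplication formula: `(⟨a⟩ * x).coeff n = a ^ p ^ n * x.coeff n`. -/
lemma teichmuller_mul_coeff {A : Type*} [CommRing A] (a : A) (x : WittVector p A) (n : ℕ) :
    (WittVector.teichmuller p a * x).coeff n = a ^ p ^ n * x.coeff n := by
  -- universal case
  have key : WittVector.teichmuller p (X 0 : MvPolynomial ℕ ℤ) * WittVector.mk p (fun k => X (k+1))
      = WittVector.mk p (fun k => (X 0 : MvPolynomial ℕ ℤ) ^ p ^ k * X (k+1)) := by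
    apply ghost_inj
    intro k
    rw [map_mul, WittVector.ghostComponent_teichmuller,
      WittVector.ghostComponent_apply, WittVector.ghostComponent_apply,
      aeval_wittPolynomial, aeval_wittPolynomial, Finset.mul_sum]
    refine Finset.sum_congr rfl fun i hi => ?_
    have hik : i ≤ k := Nat.lt_succ_iff.mp (Finset.mem_range.mp hi)
    have hpk : p ^ i * p ^ (k - i) = p ^ k := by
      rw [← pow_add, Nat.add_sub_cancel' hik]
    rw [WittVector.coeff_mk, WittVector.coeff_mk, mul_pow, ← pow_mul, hpk]
    ring
  -- transfer
  have inst : Algebra ℤ A := inferInstance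
  set g : ℕ → A := fun k => Nat.rec a (fun k _ => x.coeff k) k with hg
  have hg0 : g 0 = a := rfl
  have hgs : ∀ k, g (k+1) = x.coeff k := fun k => rfl
  set φ : MvPolynomial ℕ ℤ →+* A := (aeval g).toRingHom with hφ
  have hφX : ∀ k, φ (X k) = g k := fun k => aeval_X g k
  have h1 : WittVector.map φ (WittVector.mk p (fun k => X (k+1))) = x := by
    ext k
    rw [WittVector.map_coeff, WittVector.coeff_mk, hφX, hgs]
  have := congrArg (fun z => (WittVector.map φ z).coeff n) key
  simp only [map_mul, WittVector.map_teichmuller, h1, WittVector.map_coeff,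
    WittVector.coeff_mk, hφX, hg0, map_pow] at this
  rw [this, hgs]

end WittHatAux

namespace WittHatAux

variable (p : ℕ) [hp : Fact p.Prime]

/-- The universal carry witt vector. -/
noncomputable def cU : WittVector p (MvPolynomial Bool ℤ) :=
  WittVector.teichmuller p (X true) + WittVector.teichmuller p (X false)
    - WittVector.teichmuller p (X true + X false)

/-- Its coefficients, universal polynomials in two variables. -/
noncomputable def carryP (n : ℕ) : MvPolynomial Bool ℤ := (cU p).coeff n

lemma ghost_cU (k : ℕ) :
    ∑ i ∈ Finset.range (k + 1),
        (p : MvPolynomial Bool ℤ) ^ i * carryP p i ^ p ^ (k - i)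
      = X true ^ p ^ k + X false ^ p ^ k - (X true + X false) ^ p ^ k := by
  have h1 : WittVector.ghostComponent k (cU p)
      = X true ^ p ^ k + X false ^ p ^ k - (X true + X false) ^ p ^ k := by
    rw [cU, map_sub, map_add, WittVector.ghostComponent_teichmuller,
      WittVector.ghostComponent_teichmuller, WittVector.ghostComponent_teichmuller]
  have h2 : WittVector.ghostComponent k (cU p)
      = ∑ i ∈ Finset.range (k + 1),
          (p : MvPolynomial Bool ℤ) ^ i * carryP p i ^ p ^ (k - i) := by
    rw [WittVector.ghostComponent_apply, aeval_wittPolynomial]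
    rfl
  rw [← h2, h1]

lemma carryP_isHomogeneous (n : ℕ) : (carryP p n).IsHomogeneous (p ^ n) := by
  induction n using Nat.strong_induction_on with
  | _ n IH =>
    have key : (C ((p : ℤ) ^ n) : MvPolynomial Bool ℤ) * carryP p n
        = (X true ^ p ^ n + X false ^ p ^ n - (X true + X false) ^ p ^ n)
          - ∑ i ∈ Finset.range n, (p : MvPolynomial Bool ℤ) ^ i * carryP p i ^ p ^ (n - i) := by
      have := ghost_cU p n
      rw [Finset.sum_range_succ] at this
      have hC : (C ((p : ℤ) ^ n) : MvPolynomial Bool ℤ) = (p : MvPolynomial Bool ℤ) ^ n := by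
        rw [map_pow, map_natCast]
      rw [hC]
      rw [Nat.sub_self, pow_zero, pow_one] at this
      linear_combination this
    have hX : ∀ b : Bool, ((X b : MvPolynomial Bool ℤ) ^ p ^ n).IsHomogeneous (p ^ n) :=
      fun b => isHomogeneous_X_pow _ _
    have hXY : (((X true + X false) : MvPolynomial Bool ℤ) ^ p ^ n).IsHomogeneous (p ^ n) := by
      have := ((isHomogeneous_X ℤ true).add (isHomogeneous_X ℤ false)).pow (p ^ n)
      simpa using this
    have hsum : (∑ i ∈ Finset.range n,
        (p : MvPolynomial Bool ℤ) ^ i * carryP p i ^ p ^ (n - i)).IsHomogeneous (p ^ n) := by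
      refine MvPolynomial.IsHomogeneous.sum _ _ _ fun i hi => ?_
      have hi' : i < n := Finset.mem_range.mp hi
      have h1 : (carryP p i ^ p ^ (n - i)).IsHomogeneous (p ^ i * p ^ (n - i)) :=
        (IH i hi').pow _
      have h2 : p ^ i * p ^ (n - i) = p ^ n := by
        rw [← pow_add, Nat.add_sub_cancel' hi'.le]
      rw [h2] at h1
      have hC : ((p : MvPolynomial Bool ℤ)) ^ i = C ((p : ℤ) ^ i) := by
        rw [map_pow, map_natCast]
      rw [hC]
      exact h1.C_mul _
    have hbig : ((C ((p : ℤ) ^ n) : MvPolynomial Bool ℤ) * carryP p n).IsHomogeneous (p ^ n) := by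
      rw [key]
      exact (((hX true).add (hX false)).sub hXY).sub hsum
    -- cancel the nonzero integer constant
    intro d hd
    apply hbig
    rw [coeff_C_mul]
    exact mul_ne_zero (pow_ne_zero _ (by exact_mod_cast hp.out.ne_zero)) hd

lemma weight_one_bool (d : Bool →₀ ℕ) :
    (Finsupp.weight (1 : Bool → ℕ)) d = d true + d false := by
  rw [Finsupp.weight_apply, Finsupp.sum_fintype]
  · simp [Fintype.sum_bool]
  · intro i; simp

lemma carryP_support_pos (n : ℕ) (d : Bool →₀ ℕ) (hd : d ∈ (carryP p n).support) (b : Bool) :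
    d b ≠ 0 := by
  intro hdb
  -- evaluate at (X b ↦ 0, other ↦ 1)
  set g : Bool → ℤ := fun i => if i = b then 0 else 1 with hg
  have h0 : eval g (carryP p n) = 0 := by
    have : WittVector.map (eval g) (cU p) = 0 := by
      rw [cU, map_sub, map_add, WittVector.map_teichmuller, WittVector.map_teichmuller,
        WittVector.map_teichmuller]
      cases b <;>
        simp [hg, eval_X, WittVector.teichmuller_zero]
    have := congrArg (fun z => WittVector.coeff z n) this
    simpa [WittVector.map_coeff, WittVector.zero_coeff, carryP] using this
  rw [eval_eq] at h0
  rw [Finset.sum_eq_single d] at h0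
  · have hprod : ∏ i ∈ d.support, g i ^ d i = 1 := by
      apply Finset.prod_eq_one
      intro i hi
      have : i ≠ b := by
        intro h; subst h; exact (Finsupp.mem_support_iff.mp hi) hdb
      simp [hg, this]
    rw [hprod, mul_one] at h0
    exact (mem_support_iff.mp hd) h0
  · intro d' hd' hne
    by_cases hdb' : d' b = 0
    · exfalso
      apply hne
      have h1 : d' true + d' false = p ^ n := by
        rw [← weight_one_bool]; exact carryP_isHomogeneous p n (mem_support_iff.mp hd')
      have h2 : d true + d false = p ^ n := by
        rw [← weight_one_bool]; exact carryP_isHomogeneous p n (mem_support_iff.mp hd)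
      ext i
      cases i <;> cases b <;> omega
    · apply mul_eq_zero_of_right
      apply Finset.prod_eq_zero (Finsupp.mem_support_iff.mpr hdb')
      simp [hg, zero_pow hdb']
  · intro hdn
    exact absurd hd hdn

/-- Main carry estimate: the coefficients of `⟨a⟩+⟨b⟩-⟨a+b⟩` lie in prescribed powers of `𝔞`. -/
lemma carry_coeff_mem {A : Type*} [CommRing A] (𝔞 : Ideal A) (a b : A) (u v w n : ℕ)
    (ha : a ∈ 𝔞 ^ u) (hb : b ∈ 𝔞 ^ v)
    (hw : ∀ s t : ℕ, s + t = p ^ n → s ≠ 0 → t ≠ 0 → w ≤ s * u + t * v) :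
    (WittVector.teichmuller p a + WittVector.teichmuller p b
      - WittVector.teichmuller p (a + b)).coeff n ∈ 𝔞 ^ w := by
  set g : Bool → A := fun i => if i then a else b with hg
  set φ : MvPolynomial Bool ℤ →+* A := (aeval g).toRingHom with hφ
  have hmap : WittVector.map φ (cU p)
      = WittVector.teichmuller p a + WittVector.teichmuller p b
        - WittVector.teichmuller p (a + b) := by
    rw [cU, map_sub, map_add, WittVector.map_teichmuller, WittVector.map_teichmuller,
      WittVector.map_teichmuller]
    simp [hφ, hg]
  have hcoeff : (WittVector.teichmuller p a + WittVector.teichmuller p b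
      - WittVector.teichmuller p (a + b)).coeff n = φ (carryP p n) := by
    rw [← hmap, WittVector.map_coeff]; rfl
  rw [hcoeff]
  rw [show (φ (carryP p n)) = aeval g (carryP p n) from rfl]
  rw [aeval_def, eval₂_eq]
  apply Ideal.sum_mem
  intro d hd
  have hs : d true ≠ 0 := carryP_support_pos p n d hd true
  have ht : d false ≠ 0 := carryP_support_pos p n d hd false
  have hsum : d true + d false = p ^ n := by
    rw [← weight_one_bool]; exact carryP_isHomogeneous p n (mem_support_iff.mp hd)
  have hsupp : d.support = Finset.univ := by
    apply Finset.eq_univ_iff_forall.mpr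
    intro i
    cases i
    · exact Finsupp.mem_support_iff.mpr ht
    · exact Finsupp.mem_support_iff.mpr hs
  have hprod : ∏ i ∈ d.support, g i ^ d i = a ^ d true * b ^ d false := by
    rw [hsupp]
    rw [Fintype.prod_bool]
    simp [hg]
  rw [hprod]
  apply Ideal.mul_mem_left
  have hmem : a ^ d true * b ^ d false ∈ 𝔞 ^ (d true * u + d false * v) := by
    have h1 : a ^ d true ∈ (𝔞 ^ u) ^ d true := Ideal.pow_mem_pow ha _
    have h2 : b ^ d false ∈ (𝔞 ^ v) ^ d false := Ideal.pow_mem_pow hb _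
    rw [← pow_mul, mul_comm u] at h1
    rw [← pow_mul, mul_comm v] at h2
    rw [pow_add]
    exact Ideal.mul_mem_mul h1 h2
  exact Ideal.pow_le_pow_right (hw _ _ hsum hs ht) hmem

end WittHatAux
namespace WittHatAux

lemma coeff_select' {p : ℕ} [Fact p.Prime] {A : Type*} [CommRing A]
    (P : ℕ → Prop) (x : WittVector p A) (n : ℕ) [Decidable (P n)] :
    (WittVector.select P x).coeff n = if P n then x.coeff n else 0 := by
  rw [WittVector.select, WittVector.coeff_mk]
  by_cases h : P n
  · rw [if_pos h, if_pos h]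
  · rw [if_neg h, if_neg h]

end WittHatAux

open WittHatAux

/-- Let `p` be a prime, `A` a commutative ring and `𝔞 ⊆ A` a nilpotent
ideal.  Then the set `Ŵ(𝔞)` of Witt vectors all of whose components lie in `𝔞` and all
but finitely many of whose components are zero is an ideal of `W(A)`; in particular it
is closed under addition. -/
theorem wittHat_isIdeal_of_nilpotent
    (p : ℕ) [Fact p.Prime] (A : Type*) [CommRing A] (𝔞 : Ideal A)
    (N : ℕ) (hN : 𝔞 ^ N = ⊥) :
    ∃ I : Ideal (WittVector p A),
      (I : Set (WittVector p A)) =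
        {x : WittVector p A | (∀ n, x.coeff n ∈ 𝔞) ∧ {n | x.coeff n ≠ 0}.Finite} := by
  classical
  set M := N + 1 with hM
  have hMbot : 𝔞 ^ M = ⊥ := by
    rw [hM, pow_succ, hN]; simp
  have hple : 1 < p := (Fact.out : p.Prime).one_lt
  set S : Set (WittVector p A) :=
    {x : WittVector p A | (∀ n, x.coeff n ∈ 𝔞) ∧ {n | x.coeff n ≠ 0}.Finite} with hSdef
  have hmemS : ∀ x : WittVector p A,
      ((∀ n, x.coeff n ∈ 𝔞) ∧ {n | x.coeff n ≠ 0}.Finite) → x ∈ S := fun x h => h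
  have hbound : ∀ x : WittVector p A, x ∈ S → ∃ m, ∀ n, m ≤ n → x.coeff n = 0 := by
    intro x hx
    obtain ⟨-, hfin⟩ := hx
    obtain ⟨m, hm⟩ := hfin.bddAbove
    refine ⟨m + 1, fun n hn => ?_⟩
    by_contra hc
    have : n ≤ m := hm hc
    omega
  have hfin_of_bound : ∀ (x : WittVector p A) (m : ℕ), (∀ n, m ≤ n → x.coeff n = 0) →
      {n | x.coeff n ≠ 0}.Finite := by
    intro x m h
    apply Set.Finite.subset (Set.finite_Iio m)
    intro n hn
    simp only [Set.mem_setOf_eq] at hn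
    by_contra h2
    exact hn (h n (by simpa using h2))
  have hzero : (0 : WittVector p A) ∈ S := by
    refine ⟨fun n => by simp [WittVector.zero_coeff], ?_⟩
    apply hfin_of_bound _ 0
    intro n _
    simp [WittVector.zero_coeff]
  -- generic folding of finite sums of shifted Teichmüller lifts
  have foldgen : ∀ (T : A → Prop),
      (∀ a, T a → ∀ (i : ℕ) (x : WittVector p A), x ∈ S →
        x + (WittVector.verschiebung (p := p))^[i] (WittVector.teichmuller p a) ∈ S) →
      ∀ (K : ℕ) (e : ℕ → ℕ) (b : ℕ → A), (∀ l, T (b l)) →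
      ∀ z, z ∈ S →
        z + ∑ l ∈ Finset.range K,
          (WittVector.verschiebung (p := p))^[e l] (WittVector.teichmuller p (b l)) ∈ S := by
    intro T hT K
    induction K with
    | zero => intro e b hb z hz; simpa using hz
    | succ K IHK =>
      intro e b hb z hz
      rw [Finset.sum_range_succ, ← add_assoc]
      exact hT (b K) (hb K) (e K) _ (IHK e b hb z hz)
  -- adding a single shifted Teichmüller lift, by descending induction on ideal powers
  have addV : ∀ (t : ℕ) (a : A), a ∈ 𝔞 → a ∈ 𝔞 ^ (M - t) →
      ∀ (i : ℕ) (x : WittVector p A), x ∈ S →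
        x + (WittVector.verschiebung (p := p))^[i] (WittVector.teichmuller p a) ∈ S := by
    intro t
    induction t with
    | zero =>
      intro a _ ha' i x hx
      rw [Nat.sub_zero, hMbot, Ideal.mem_bot] at ha'
      subst ha'
      rw [WittVector.teichmuller_zero, Function.iterate_fixed (map_zero _), add_zero]
      exact hx
    | succ t IH =>
      intro a ha ha' i x hx
      set xi := x.coeff i with hxi
      set x' := WittVector.select (fun n => ¬ n = i) x with hx'def
      have hx'c : ∀ n, x'.coeff n = if n = i then 0 else x.coeff n := by
        intro n
        rw [hx'def, coeff_select']
        by_cases h : n = i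
        · rw [if_neg (not_not_intro h), if_pos h]
        · rw [if_pos h, if_neg h]
      have hxdec : x' + (WittVector.verschiebung (p := p))^[i] (WittVector.teichmuller p xi)
          = x := by
        have h1 := WittVector.select_add_select_not (fun n => ¬ n = i) x
        have h2 : WittVector.select (fun n => ¬ ¬ n = i) x
            = (WittVector.verschiebung (p := p))^[i] (WittVector.teichmuller p xi) := by
          ext n
          rw [coeff_select', coeff_iterate_verschiebung_teichmuller]
          by_cases h : n = i
          · rw [if_pos (not_not_intro h), if_pos h, h]
          · rw [if_neg (fun hc => h (not_not.mp hc)), if_neg h]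
        rw [← h2]
        exact h1
      set c := WittVector.teichmuller p xi + WittVector.teichmuller p a
          - WittVector.teichmuller p (xi + a) with hc
      have hVadd : ∀ (k : ℕ) (u v : WittVector p A),
          (WittVector.verschiebung (p := p))^[k] (u + v)
            = (WittVector.verschiebung (p := p))^[k] u
              + (WittVector.verschiebung (p := p))^[k] v :=
        fun k u v => iterate_map_add _ k u v
      have hkey : x + (WittVector.verschiebung (p := p))^[i] (WittVector.teichmuller p a)
          = (x' + (WittVector.verschiebung (p := p))^[i] (WittVector.teichmuller p (xi + a)))
            + (WittVector.verschiebung (p := p))^[i] c := by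
        rw [← hxdec]
        have h3 : WittVector.teichmuller p xi + WittVector.teichmuller p a
            = WittVector.teichmuller p (xi + a) + c := by
          rw [hc]; ring
        rw [add_assoc, ← hVadd, h3, hVadd]
        ring
      have hc_mem : ∀ n, c.coeff n ∈ 𝔞 := by
        intro n
        have := carry_coeff_mem p 𝔞 xi a 1 1 1 n
          (by simpa [pow_one] using hx.1 i) (by simpa [pow_one] using ha)
          (fun s t hst hs ht => by omega)
        simpa [pow_one, hc] using this
      have hc_mem' : ∀ n, c.coeff n ∈ 𝔞 ^ (M - t) := by
        intro n
        refine carry_coeff_mem p 𝔞 xi a 1 (M - (t + 1)) (M - t) n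
          (by simpa [pow_one] using hx.1 i) ha' ?_
        intro s t' hst hs ht'
        have h1 : M - (t + 1) ≤ t' * (M - (t + 1)) :=
          Nat.le_mul_of_pos_left _ (Nat.pos_of_ne_zero ht')
        omega
      have hc_zero : ∀ n, M ≤ n → c.coeff n = 0 := by
        intro n hn
        have h1 : c.coeff n ∈ 𝔞 ^ p ^ n :=
          carry_coeff_mem p 𝔞 xi a 1 1 (p ^ n) n
            (by simpa [pow_one] using hx.1 i) (by simpa [pow_one] using ha)
            (fun s t hst hs ht => by omega)
        have h2 : M ≤ p ^ n := le_trans (le_trans hn (Nat.lt_pow_self hple : n < p ^ n).le) le_rfl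
        have h3 : 𝔞 ^ p ^ n ≤ 𝔞 ^ M := Ideal.pow_le_pow_right h2
        rw [hMbot] at h3
        simpa using h3 h1
      have hcdec : c = ∑ l ∈ Finset.range M,
          (WittVector.verschiebung (p := p))^[l] (WittVector.teichmuller p (c.coeff l)) := by
        rw [sum_V_teich]
        ext n
        rw [WittVector.coeff_mk]
        by_cases hn : n < M
        · rw [if_pos hn]
        · rw [if_neg hn, hc_zero n (le_of_not_gt hn)]
      have hVc : (WittVector.verschiebung (p := p))^[i] c
          = ∑ l ∈ Finset.range M,
            (WittVector.verschiebung (p := p))^[i + l]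
              (WittVector.teichmuller p (c.coeff l)) := by
        set Vh : WittVector p A →+ WittVector p A :=
          AddMonoidHom.mk' ((WittVector.verschiebung (p := p))^[i]) (hVadd i) with hVh
        calc (WittVector.verschiebung (p := p))^[i] c
            = Vh c := rfl
          _ = Vh (∑ l ∈ Finset.range M, (WittVector.verschiebung (p := p))^[l]
                (WittVector.teichmuller p (c.coeff l))) := by rw [← hcdec]
          _ = ∑ l ∈ Finset.range M, Vh ((WittVector.verschiebung (p := p))^[l]
                (WittVector.teichmuller p (c.coeff l))) := map_sum Vh _ _
          _ = _ := by
              refine Finset.sum_congr rfl fun l _ => ?_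
              show (WittVector.verschiebung (p := p))^[i] _ = _
              rw [← Function.iterate_add_apply]
      have hx'' : (x' + (WittVector.verschiebung (p := p))^[i]
          (WittVector.teichmuller p (xi + a))) ∈ S := by
        have hdisj : ∀ n, x'.coeff n = 0 ∨
            ((WittVector.verschiebung (p := p))^[i]
              (WittVector.teichmuller p (xi + a))).coeff n = 0 := by
          intro n
          rw [hx'c, coeff_iterate_verschiebung_teichmuller]
          by_cases h : n = i
          · left; rw [if_pos h]
          · right; rw [if_neg h]
        obtain ⟨m, hm⟩ := hbound x hx
        constructor
        · intro n
          rw [WittVector.coeff_add_of_disjoint _ _ _ hdisj, hx'c,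
            coeff_iterate_verschiebung_teichmuller]
          by_cases h : n = i
          · rw [if_pos h, if_pos h, zero_add]
            exact Ideal.add_mem _ (hx.1 i) ha
          · rw [if_neg h, if_neg h, add_zero]
            exact hx.1 n
        · apply hfin_of_bound _ (max m (i + 1))
          intro n hn
          rw [WittVector.coeff_add_of_disjoint _ _ _ hdisj, hx'c,
            coeff_iterate_verschiebung_teichmuller]
          rw [if_neg (by omega), if_neg (by omega), hm n (by omega), add_zero]
      rw [hkey, hVc]
      exact foldgen (fun b => b ∈ 𝔞 ∧ b ∈ 𝔞 ^ (M - t))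
        (fun b hb j y hy => IH b hb.1 hb.2 j y hy) M (fun l => i + l)
        (fun l => c.coeff l) (fun l => ⟨hc_mem l, hc_mem' l⟩) _ hx''
  -- closure under addition
  have addS : ∀ x y : WittVector p A, x ∈ S → y ∈ S → x + y ∈ S := by
    intro x y hx hy
    obtain ⟨m, hm⟩ := hbound y hy
    have hydec : y = ∑ i ∈ Finset.range m,
        (WittVector.verschiebung (p := p))^[i] (WittVector.teichmuller p (y.coeff i)) := by
      rw [sum_V_teich]
      ext n
      rw [WittVector.coeff_mk]
      by_cases hn : n < m
      · rw [if_pos hn]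
      · rw [if_neg hn, hm n (le_of_not_gt hn)]
    rw [hydec]
    refine foldgen (fun b => b ∈ 𝔞) (fun b hb j z hz => ?_) m (fun i => i)
      (fun i => y.coeff i) (fun i => hy.1 i) x hx
    have hMN : M - N = 1 := by omega
    exact addV N b hb (by rw [hMN, pow_one]; exact hb) j z hz
  -- closure under multiplication
  have smulS : ∀ (r x : WittVector p A), x ∈ S → r * x ∈ S := by
    intro r x hx
    obtain ⟨m, hm⟩ := hbound x hx
    have hxdec : x = ∑ i ∈ Finset.range m,
        (WittVector.verschiebung (p := p))^[i] (WittVector.teichmuller p (x.coeff i)) := by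
      rw [sum_V_teich]
      ext n
      rw [WittVector.coeff_mk]
      by_cases hn : n < m
      · rw [if_pos hn]
      · rw [if_neg hn, hm n (le_of_not_gt hn)]
    have hprod : r * x = ∑ i ∈ Finset.range m,
        (WittVector.verschiebung (p := p))^[i]
          (WittVector.teichmuller p (x.coeff i) * (WittVector.frobenius (p := p))^[i] r) := by
      conv_lhs => rw [hxdec]
      rw [Finset.mul_sum]
      refine Finset.sum_congr rfl fun i _ => ?_
      rw [mul_comm, WittVector.iterate_verschiebung_mul_left]
    have hterm : ∀ i, (WittVector.verschiebung (p := p))^[i]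
        (WittVector.teichmuller p (x.coeff i) * (WittVector.frobenius (p := p))^[i] r) ∈ S := by
      intro i
      constructor
      · intro n
        rw [coeff_iterate_verschiebung]
        by_cases h : i ≤ n
        · rw [if_pos h, teichmuller_mul_coeff]
          have h1 : x.coeff i ^ p ^ (n - i) ∈ 𝔞 := by
            have hpne : p ≠ 0 := by omega
            apply Ideal.pow_le_self (pow_ne_zero _ hpne)
            exact Ideal.pow_mem_pow (hx.1 i) _
          exact Ideal.mul_mem_right _ _ h1
        · rw [if_neg h]; exact Ideal.zero_mem _
      · apply hfin_of_bound _ (i + M)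
        intro n hn
        rw [coeff_iterate_verschiebung, if_pos (by omega), teichmuller_mul_coeff]
        have h1 : x.coeff i ^ p ^ (n - i) ∈ 𝔞 ^ M := by
          have h2 : M ≤ p ^ (n - i) := by
            have h3 : n - i < p ^ (n - i) := (Nat.lt_pow_self hple : n - i < p ^ (n - i))
            omega
          exact Ideal.pow_le_pow_right h2 (Ideal.pow_mem_pow (hx.1 i) _)
        rw [hMbot] at h1
        rw [Ideal.mem_bot.mp h1, zero_mul]
    have hsum : ∀ K : ℕ, (∑ i ∈ Finset.range K,
        (WittVector.verschiebung (p := p))^[i]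
          (WittVector.teichmuller p (x.coeff i) * (WittVector.frobenius (p := p))^[i] r)) ∈ S := by
      intro K
      induction K with
      | zero => simpa using hzero
      | succ K IHK =>
        rw [Finset.sum_range_succ]
        exact addS _ _ IHK (hterm K)
    rw [hprod]
    exact hsum m
  exact ⟨{ carrier := S,
           add_mem' := fun {x y} hx hy => addS x y hx hy,
           zero_mem' := hzero,
           smul_mem' := fun c x hx => by simpa [smul_eq_mul] using smulS c x hx }, rfl⟩
end

section
/- Let p be a prime, A a commutative ring and 𝔞 ⊆ A an ideal such that A is 𝔞-adically complete and separated and A/𝔞 is a perfect ring of characteristic p; if p = 2 assume in addition that 2 is invertible in A or 2·A = 0. Then any subring 𝕎 of W(A) satisfying: (i) the Frobenius f maps 𝕎 into itself, (ii) 𝕎 ∩ W(𝔞) = Ŵ(𝔞), and (iii) 𝕎 surjects onto W(A/𝔞), is also stable under the Verschiebung v of W(A). -/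
open WittVector

/-- The set `W(𝔞)` of Witt vectors all of whose components lie in `𝔞`. -/
def wittIn (p : ℕ) [Fact p.Prime] {A : Type*} [CommRing A] (𝔞 : Ideal A) :
    Set (WittVector p A) :=
  {x | ∀ n, x.coeff n ∈ 𝔞}

/-- The set `Ŵ(𝔞)` of Witt vectors whose components lie in `𝔞` and converge to zero
`𝔞`-adically. -/
def wittHat (p : ℕ) [Fact p.Prime] {A : Type*} [CommRing A] (𝔞 : Ideal A) :
    Set (WittVector p A) :=
  {x | (∀ n, x.coeff n ∈ 𝔞) ∧ ∀ k, {n | x.coeff n ∉ 𝔞 ^ k}.Finite}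

section Aux

open MvPolynomial Finset

variable (p : ℕ) [hp : Fact p.Prime] {R : Type*} [CommRing R]

theorem vone_coeff (n : ℕ) :
    (verschiebung (1 : WittVector p R)).coeff n = if n = 1 then 1 else 0 := by
  match n with
  | 0 => simp
  | 1 => simp [verschiebung_coeff_succ, one_coeff_zero]
  | (k+2) => simp [verschiebung_coeff_succ, one_coeff_eq_of_pos]

theorem vOneMul_isPoly :
    IsPoly p (fun R _Rcr x => verschiebung (1 : WittVector p R) * x) := by
  refine ⟨⟨fun n => bind₁
    (fun pr : Fin 2 × ℕ => if pr.1 = 0 then (if pr.2 = 1 then 1 else 0) else X pr.2)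
    (wittMul p n), ?_⟩⟩
  intro R _ x
  funext n
  rw [mul_coeff, aeval_bind₁]
  apply eval₂Hom_congr (RingHom.ext_int _ _) _ rfl
  funext pr
  obtain ⟨b, i⟩ := pr
  fin_cases b
  · simp [Function.uncurry, peval, vone_coeff]
  · simp [Function.uncurry, peval]

theorem versch_frob (x : WittVector p R) :
    verschiebung (frobenius x) = verschiebung 1 * x := by
  have h1 : IsPoly p fun {R} [CommRing R] x => verschiebung (frobenius x) :=
    IsPoly.comp (hg := verschiebung_isPoly) (hf := frobenius_isPoly p)
  have h2 : IsPoly p fun {R} [CommRing R] (x : WittVector p R) =>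
      verschiebung 1 * x := vOneMul_isPoly p
  ghost_calc x
  rintro ⟨⟩ <;> ghost_simp

theorem ghost_pvb (n : ℕ) :
    ghostComponent n ((p : WittVector p ℤ) - verschiebung 1) =
      if n = 0 then (p : ℤ) else 0 := by
  match n with
  | 0 => simp [map_sub, ghostComponent_zero_verschiebung]
  | (k+1) => simp [map_sub, ghostComponent_verschiebung]

theorem pvb_sum (n : ℕ) :
    ∑ i ∈ range (n + 1),
        (p : ℤ) ^ i * ((p : WittVector p ℤ) - verschiebung 1).coeff i ^ p ^ (n - i) =
      if n = 0 then (p : ℤ) else 0 := by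
  rw [← ghost_pvb, ghostComponent_apply, aeval_wittPolynomial]

theorem pvb_coeff_zero : ((p : WittVector p ℤ) - verschiebung 1).coeff 0 = (p : ℤ) := by
  have h := pvb_sum p 0
  simpa using h

theorem pvb_key (c : ℕ → ℕ) (hc0 : c 0 = 1)
    (hstep : ∀ n i : ℕ, i < n → n + c n ≤ i + c i * p ^ (n - i)) :
    ∀ n, (p : ℤ) ^ (c n) ∣ ((p : WittVector p ℤ) - verschiebung 1).coeff n := by
  intro n
  induction n using Nat.strong_induction_on with
  | _ n ih =>
    match n with
    | 0 => rw [hc0, pow_one, pvb_coeff_zero]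
    | (m+1) =>
      have hsum := pvb_sum p (m + 1)
      rw [if_neg (Nat.succ_ne_zero m), Finset.sum_range_succ] at hsum
      have heq : (p : ℤ) ^ (m + 1) * ((p : WittVector p ℤ) - verschiebung 1).coeff (m + 1) =
          -∑ i ∈ range (m + 1),
            (p : ℤ) ^ i * ((p : WittVector p ℤ) - verschiebung 1).coeff i ^ p ^ (m + 1 - i) := by
        rw [eq_neg_iff_add_eq_zero, add_comm]
        simpa using hsum
      have hdvd : (p : ℤ) ^ (m + 1 + c (m + 1)) ∣
          (p : ℤ) ^ (m + 1) * ((p : WittVector p ℤ) - verschiebung 1).coeff (m + 1) := by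
        rw [heq]
        refine dvd_neg.mpr (Finset.dvd_sum ?_)
        intro i hi
        rw [Finset.mem_range] at hi
        have h1 : (p : ℤ) ^ (c i * p ^ (m + 1 - i)) ∣
            ((p : WittVector p ℤ) - verschiebung 1).coeff i ^ p ^ (m + 1 - i) := by
          rw [pow_mul]
          exact pow_dvd_pow_of_dvd (ih i (by omega)) _
        refine dvd_trans (pow_dvd_pow _ (hstep (m + 1) i hi)) ?_
        rw [pow_add]
        exact mul_dvd_mul_left _ h1
      rw [pow_add] at hdvd
      exact (mul_dvd_mul_iff_left (a := (p : ℤ) ^ (m + 1))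
        (pow_ne_zero _ (by exact_mod_cast hp.out.ne_zero))).mp hdvd

theorem two_mul_add_one_le (m : ℕ) : 2 * m + 1 ≤ 3 ^ m := by
  induction m with
  | zero => simp
  | succ k ih => rw [pow_succ]; omega

theorem pvb_dvd_one : ∀ n, (p : ℤ) ∣ ((p : WittVector p ℤ) - verschiebung 1).coeff n := by
  have h := pvb_key p (fun _ => 1) rfl ?_
  · intro n; simpa using h n
  · intro n i hi
    have h1 : n - i < 2 ^ (n - i) := Nat.lt_two_pow_self
    have h2 : 2 ^ (n - i) ≤ p ^ (n - i) := Nat.pow_le_pow_left hp.out.two_le _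
    show n + 1 ≤ i + 1 * p ^ (n - i)
    rw [one_mul]
    omega

theorem pvb_dvd_big (hp3 : 3 ≤ p) :
    ∀ n, (p : ℤ) ^ (n + 1) ∣ ((p : WittVector p ℤ) - verschiebung 1).coeff n := by
  refine pvb_key p (fun n => n + 1) rfl ?_
  intro n i hi
  obtain ⟨m, rfl⟩ := Nat.exists_eq_add_of_lt hi
  have hni : i + m + 1 - i = m + 1 := by omega
  rw [hni]
  have h1 : 2 * (m + 1) + 1 ≤ 3 ^ (m + 1) := two_mul_add_one_le _
  have h2 : 3 ^ (m + 1) ≤ p ^ (m + 1) := Nat.pow_le_pow_left hp3 _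
  have h3 : (i + 1) * (2 * (m + 1) + 1) ≤ (i + 1) * p ^ (m + 1) :=
    Nat.mul_le_mul_left _ (le_trans h1 h2)
  nlinarith

end Aux

/-- Under the admissibility assumptions (with the extra condition at
`p = 2` that `2` is invertible in `A` or `2·A = 0`), any subring `𝕎` of `W(A)` which is
Frobenius-stable, satisfies `𝕎 ∩ W(𝔞) = Ŵ(𝔞)`, and surjects onto `W(A/𝔞)`, is also
stable under the Verschiebung `v`. -/
theorem special_subring_verschiebung_stable
    (p : ℕ) [Fact p.Prime] (A : Type*) [CommRing A] (𝔞 : Ideal A)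
    [IsAdicComplete 𝔞 A] [CharP (A ⧸ 𝔞) p] [PerfectRing (A ⧸ 𝔞) p]
    (h2 : p = 2 → IsUnit (2 : A) ∨ (2 : A) = 0)
    (𝕎 : Subring (WittVector p A))
    (hf : ∀ x ∈ 𝕎, WittVector.frobenius x ∈ 𝕎)
    (hint : (𝕎 : Set (WittVector p A)) ∩ wittIn p 𝔞 = wittHat p 𝔞)
    (hsurj : ∀ y : WittVector p (A ⧸ 𝔞), ∃ x ∈ 𝕎,
      WittVector.map (Ideal.Quotient.mk 𝔞) x = y) :
    ∀ x ∈ 𝕎, WittVector.verschiebung x ∈ 𝕎 := by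
  have hp := (Fact.out : p.Prime)
  -- `p ∈ 𝔞`
  have hpa : (p : A) ∈ 𝔞 := by
    have h0 : ((p : ℕ) : A ⧸ 𝔞) = 0 := CharP.cast_eq_zero _ p
    rw [← map_natCast (Ideal.Quotient.mk 𝔞), Ideal.Quotient.eq_zero_iff_mem] at h0
    exact h0
  -- `Ŵ(𝔞) ⊆ 𝕎`
  have hhat : wittHat p 𝔞 ⊆ (𝕎 : Set (WittVector p A)) := by
    rw [← hint]; exact Set.inter_subset_left
  -- `Ŵ(𝔞)` is stable under Verschiebung
  have hvhat : ∀ z ∈ wittHat p 𝔞, WittVector.verschiebung z ∈ wittHat p 𝔞 := by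
    rintro z ⟨hz1, hz2⟩
    refine ⟨?_, ?_⟩
    · intro n
      match n with
      | 0 => simpa using 𝔞.zero_mem
      | (m+1) => simpa [verschiebung_coeff_succ] using hz1 m
    · intro k
      refine Set.Finite.subset (Set.Finite.image (· + 1) (hz2 k)) ?_
      intro n hn
      match n with
      | 0 => exact absurd ((𝔞 ^ k).zero_mem) (by simpa using hn)
      | (m+1) =>
        exact ⟨m, by simpa [verschiebung_coeff_succ] using hn, rfl⟩
  -- `b = p - V(1)` over `A`
  set bA : WittVector p A := (p : WittVector p A) - WittVector.verschiebung 1 with hbA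
  have hbA_map : bA = WittVector.map (Int.castRingHom A)
      ((p : WittVector p ℤ) - WittVector.verschiebung 1) := by
    rw [hbA, map_sub, map_natCast, WittVector.map_verschiebung]
    norm_num
  have hbA_coeff : ∀ n, bA.coeff n =
      ((((p : WittVector p ℤ) - WittVector.verschiebung 1).coeff n : ℤ) : A) := by
    intro n; rw [hbA_map, WittVector.map_coeff]; rfl
  -- `V(1) ∈ 𝕎`
  have hv1 : WittVector.verschiebung (1 : WittVector p A) ∈ 𝕎 := by
    have hkey : bA ∈ 𝕎 := by
      rcases eq_or_ne p 2 with hp2 | hp2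
      · rcases h2 hp2 with hu | hz
        · -- `2` a unit in `A` is impossible
          exfalso
          have h2a : (2 : A) ∈ 𝔞 := by
            have : ((2 : ℕ) : A) ∈ 𝔞 := hp2 ▸ hpa
            simpa using this
          have htop : 𝔞 = ⊤ := 𝔞.eq_top_of_isUnit_mem h2a hu
          have h10 : ((1 : ℕ) : A ⧸ 𝔞) = 0 := by
            rw [Nat.cast_one, ← map_one (Ideal.Quotient.mk 𝔞),
              Ideal.Quotient.eq_zero_iff_mem, htop]
            trivial
          have := (CharP.cast_eq_zero_iff (A ⧸ 𝔞) p 1).mp h10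
          exact hp.one_lt.ne' (Nat.dvd_one.mp this)
        · -- `2 = 0` in `A`: then `bA = 0`
          have hb0 : bA = 0 := by
            ext n
            obtain ⟨c, hc⟩ := pvb_dvd_one p n
            rw [hbA_coeff n, hc]
            push_cast
            rw [show ((p : ℕ) : A) = 2 by rw [hp2]; norm_num, hz]
            simp
          rw [hb0]; exact 𝕎.zero_mem
      · -- `p` odd: `bA ∈ Ŵ(𝔞)`
        have hp3 : 3 ≤ p := by
          have := hp.two_le; omega
        apply hhat
        refine ⟨?_, ?_⟩
        · intro n
          obtain ⟨c, hc⟩ := pvb_dvd_big p hp3 n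
          rw [hbA_coeff n, hc]
          push_cast
          exact Ideal.mul_mem_right _ _ (𝔞.pow_mem_of_mem hpa (n + 1) (Nat.succ_pos n))
        · intro k
          refine Set.Finite.subset (Set.finite_Iio k) ?_
          intro n hn
          by_contra hnk
          simp only [Set.mem_Iio, not_lt] at hnk
          apply hn
          obtain ⟨c, hc⟩ := pvb_dvd_big p hp3 n
          rw [hbA_coeff n, hc]
          push_cast
          refine Ideal.mul_mem_right _ _ ?_
          exact Ideal.pow_le_pow_right (by omega) (Ideal.pow_mem_pow hpa (n + 1))
    have : WittVector.verschiebung (1 : WittVector p A) = (p : WittVector p A) - bA := by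
      rw [hbA]; ring
    rw [this]
    exact 𝕎.sub_mem (natCast_mem 𝕎 p) hkey
  -- main argument
  intro x hx
  obtain ⟨x', hx'mem, hx'⟩ := hsurj
    ((WittVector.frobeniusEquiv p (A ⧸ 𝔞)).symm (WittVector.map (Ideal.Quotient.mk 𝔞) x))
  have hfx' : WittVector.map (Ideal.Quotient.mk 𝔞) (WittVector.frobenius x') =
      WittVector.map (Ideal.Quotient.mk 𝔞) x := by
    rw [(WittVector.frobenius_isPoly p).map (Ideal.Quotient.mk 𝔞) x', hx']
    exact (WittVector.frobeniusEquiv p (A ⧸ 𝔞)).apply_symm_apply _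
  -- `δ = F(x') - x ∈ Ŵ(𝔞)`
  set δ : WittVector p A := WittVector.frobenius x' - x with hδ
  have hδ𝕎 : δ ∈ 𝕎 := 𝕎.sub_mem (hf x' hx'mem) hx
  have hδhat : δ ∈ wittHat p 𝔞 := by
    rw [← hint]
    refine ⟨hδ𝕎, ?_⟩
    intro n
    rw [← Ideal.Quotient.eq_zero_iff_mem, ← WittVector.map_coeff]
    rw [hδ, map_sub, hfx', sub_self]
    simp
  have hvx : WittVector.verschiebung x =
      WittVector.verschiebung (1 : WittVector p A) * x' - WittVector.verschiebung δ := by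
    have : x = WittVector.frobenius x' - δ := by rw [hδ]; ring
    rw [this, map_sub, versch_frob]
  rw [hvx]
  exact 𝕎.sub_mem (𝕎.mul_mem hv1 hx'mem) (hhat (hvhat δ hδhat))
end

section
/- Let p be a prime and S → T a faithfully flat homomorphism of commutative rings. Then the induced map W(S) → W(T) is injective, and an element y ∈ W(T) lies in the image of W(S) → W(T) if and only if the two ring homomorphisms W(T) → W(T ⊗_S T), induced by t ↦ t ⊗ 1 and t ↦ 1 ⊗ t respectively, agree on y. In other words, the sequence 0 → W(S) → W(T) ⇉ W(T ⊗_S T) is exact. -/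
open scoped TensorProduct

open TensorProduct

section RingLevel

variable (S T : Type*) [CommRing S] [CommRing T] [Algebra S T]

/-- The difference of the two inclusions `T → T ⊗[S] T`, as an `S`-linear map. -/
noncomputable def wittAuxD : T →ₗ[S] T ⊗[S] T :=
  (Algebra.TensorProduct.includeLeft : T →ₐ[S] T ⊗[S] T).toLinearMap -
  (Algebra.TensorProduct.includeRight : T →ₐ[S] T ⊗[S] T).toLinearMap

lemma wittAuxD_apply (t : T) : wittAuxD S T t = t ⊗ₜ[S] 1 - 1 ⊗ₜ[S] t := rfl

lemma wittAuxD_comp_linearMap : (wittAuxD S T).comp (Algebra.linearMap S T) = 0 := by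
  ext s
  simp [wittAuxD_apply, Algebra.algebraMap_eq_smul_one, smul_tmul]

variable [Module.FaithfullyFlat S T]

lemma wittAux_lTensor_injective :
    Function.Injective ((Algebra.linearMap S T).lTensor T) := by
  have hcomp : (LinearMap.mul' S T) ∘ₗ ((Algebra.linearMap S T).lTensor T) =
      (TensorProduct.rid S T).toLinearMap := by
    apply TensorProduct.ext'
    intro t s
    simp [Algebra.smul_def, mul_comm]
  have : Function.Injective
      ((LinearMap.mul' S T) ∘ₗ ((Algebra.linearMap S T).lTensor T)) := by
    rw [hcomp]
    exact (TensorProduct.rid S T).injective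
  exact Function.Injective.of_comp this

lemma wittAux_algebraMap_injective : Function.Injective (algebraMap S T) := by
  have hexact0 : Function.Exact ((0 : PUnit.{1} →ₗ[S] S).lTensor T)
      ((Algebra.linearMap S T).lTensor T) := by
    intro y
    rw [LinearMap.lTensor_zero]
    constructor
    · intro h'
      refine ⟨0, ?_⟩
      have : ((Algebra.linearMap S T).lTensor T) y =
          ((Algebra.linearMap S T).lTensor T) 0 := by simpa using h'
      simpa using (wittAux_lTensor_injective S T this).symm
    · rintro ⟨w, rfl⟩
      simp
  have hexact := Module.FaithfullyFlat.lTensor_reflects_exact S T _ _ hexact0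
  intro a b hab
  have h0 : algebraMap S T (a - b) = 0 := by
    rw [map_sub, hab, sub_self]
  obtain ⟨u, hu⟩ := (hexact (a - b)).mp h0
  have : a - b = 0 := by simpa using hu.symm
  exact sub_eq_zero.mp this

lemma wittAux_exact :
    Function.Exact (Algebra.linearMap S T) (wittAuxD S T) := by
  apply Module.FaithfullyFlat.lTensor_reflects_exact S T
  -- contracting map
  set h : T ⊗[S] (T ⊗[S] T) →ₗ[S] T ⊗[S] T :=
    (LinearMap.mul' S T).rTensor T ∘ₗ (TensorProduct.assoc S T T T).symm.toLinearMap with hh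
  have key : ∀ z : T ⊗[S] T,
      h (((wittAuxD S T).lTensor T) z) = (LinearMap.mul' S T z) ⊗ₜ[S] (1 : T) - z := by
    intro z
    induction z using TensorProduct.induction_on with
    | zero => simp
    | tmul x y =>
        simp [hh, wittAuxD_apply, tmul_sub]
    | add a b ha hb =>
        simp only [map_add, ha, hb, add_tmul]
        abel
  intro y
  constructor
  · intro h0
    have := key y
    rw [h0, map_zero] at this
    refine ⟨(LinearMap.mul' S T y) ⊗ₜ[S] (1 : S), ?_⟩
    have h1 : ((Algebra.linearMap S T).lTensor T) ((LinearMap.mul' S T y) ⊗ₜ[S] (1 : S)) =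
        (LinearMap.mul' S T y) ⊗ₜ[S] (1 : T) := by
      simp
    rw [h1]
    exact sub_eq_zero.mp this.symm
  · rintro ⟨w, rfl⟩
    have : ((wittAuxD S T).lTensor T) ∘ₗ ((Algebra.linearMap S T).lTensor T) = 0 := by
      rw [← LinearMap.lTensor_comp, wittAuxD_comp_linearMap, LinearMap.lTensor_zero]
    exact congrFun (congrArg (fun f => f.toFun) this) w

lemma wittAux_eq_iff (t : T) :
    t ⊗ₜ[S] (1 : T) = (1 : T) ⊗ₜ[S] t ↔ ∃ s : S, algebraMap S T s = t := by
  have := wittAux_exact S T t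
  rw [wittAuxD_apply, sub_eq_zero] at this
  exact this.trans ⟨fun ⟨s, hs⟩ => ⟨s, hs⟩, fun ⟨s, hs⟩ => ⟨s, hs⟩⟩

end RingLevel

/-- Let `p` be a prime and `S → T` a faithfully flat homomorphism of
commutative rings.  Then `W(S) → W(T)` is injective, and `y ∈ W(T)` lies in the image
if and only if the two maps `W(T) → W(T ⊗_S T)` induced by `t ↦ t ⊗ 1` and `t ↦ 1 ⊗ t`
agree on `y`; i.e. `0 → W(S) → W(T) ⇉ W(T ⊗_S T)` is exact. -/
theorem witt_exact_of_faithfullyFlat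
    (p : ℕ) [Fact p.Prime] (S T : Type*) [CommRing S] [CommRing T] [Algebra S T]
    [Module.FaithfullyFlat S T] :
    Function.Injective (WittVector.map (p := p) (algebraMap S T)) ∧
    ∀ y : WittVector p T,
      (WittVector.map (Algebra.TensorProduct.includeLeftRingHom : T →+* T ⊗[S] T) y =
        WittVector.map ((Algebra.TensorProduct.includeRight : T →ₐ[S] T ⊗[S] T) :
          T →+* T ⊗[S] T) y ↔
        ∃ x : WittVector p S, WittVector.map (algebraMap S T) x = y) := by
  constructor
  · exact WittVector.map_injective _ (wittAux_algebraMap_injective S T)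
  · intro y
    constructor
    · intro hy
      have hcoeff : ∀ n, ∃ s : S, algebraMap S T s = y.coeff n := by
        intro n
        rw [← wittAux_eq_iff S T]
        have := congrArg (fun z => WittVector.coeff z n) hy
        simpa [WittVector.map_coeff, Algebra.TensorProduct.includeLeftRingHom] using this
      choose s hs using hcoeff
      refine ⟨WittVector.mk p s, ?_⟩
      ext n
      simp [WittVector.map_coeff, WittVector.coeff_mk, hs]
    · rintro ⟨x, rfl⟩
      ext n
      simp only [WittVector.map_coeff, Algebra.TensorProduct.includeLeftRingHom_apply,
        RingHom.coe_coe, Algebra.TensorProduct.includeRight_apply]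
      rw [wittAux_eq_iff S T]
      exact ⟨x.coeff n, rfl⟩
end

section
/- Let p be a prime, K an algebraically closed field (of arbitrary characteristic), and n ≥ 1. Then the composite map W(K) → W(K) → W_n(K), given by the Frobenius f of W(K) followed by truncation to the first n components, is surjective. In particular the truncated Frobenius W_{n+1}(K) → W_n(K) is surjective on points of algebraically closed fields. -/
lemma frobenius_surjective_aux
    (p : ℕ) [Fact p.Prime] (K : Type*) [Field K] [IsAlgClosed K] :
    Function.Surjective (WittVector.frobenius : WittVector p K → WittVector p K) := by
  by_cases hp : (p : K) = 0
  · haveI : CharP K p := (CharP.charP_iff_prime_eq_zero (Fact.out : p.Prime)).mpr hp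
    haveI : ExpChar K p := ExpChar.prime Fact.out
    exact (WittVector.frobenius_bijective p K).surjective
  · haveI : Invertible (p : K) := invertibleOfNonzero hp
    intro y
    set g := WittVector.ghostEquiv p K
    refine ⟨g.symm (fun n => Nat.rec 0 (fun m _ => g y m) n), ?_⟩
    apply g.injective
    funext m
    have h1 : ∀ (z : WittVector p K) (k : ℕ),
        g z k = WittVector.ghostComponent k z := fun z k => rfl
    rw [h1, WittVector.ghostComponent_frobenius, ← h1, g.apply_symm_apply]

/-- Let `p` be a prime, `K` an algebraically closed field, and `n ≥ 1`.
Then the composite `W(K) → W(K) → Wₙ(K)`, Frobenius followed by truncation to the first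
`n` components, is surjective.  (In particular the truncated Frobenius
`W_{n+1}(K) → Wₙ(K)` is surjective on points of algebraically closed fields.) -/
theorem truncate_frobenius_surjective
    (p : ℕ) [Fact p.Prime] (K : Type*) [Field K] [IsAlgClosed K]
    (n : ℕ) (hn : 1 ≤ n) :
    Function.Surjective
      (fun x : WittVector p K =>
        WittVector.truncate n (WittVector.frobenius x)) := by
  exact (WittVector.truncate_surjective p n K).comp (frobenius_surjective_aux p K)
end

section
/- Let p be a prime, A a commutative ring and 𝔞 ⊆ A a nilpotent ideal with p·1 ∈ 𝔞. Then the Frobenius f of W(A) is elementwise nilpotent on W(𝔞): for every Witt vector x ∈ W(A) all of whose components lie in 𝔞, there exists N such that f^N(x) = 0. -/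
open MvPolynomial Finset

/-- Evaluating `frobeniusPolyAux` at coefficients lying in an ideal lands in the ideal. -/
lemma aeval_frobeniusPolyAux_mem (p : ℕ) [Fact p.Prime] {A : Type*} [CommRing A]
    (J : Ideal A) (g : ℕ → A) (hg : ∀ i, g i ∈ J) :
    ∀ n, aeval g (WittVector.frobeniusPolyAux p n) ∈ J := by
  intro n
  induction n using Nat.strong_induction_on with
  | _ n ih =>
    rw [WittVector.frobeniusPolyAux_eq]
    simp only [map_sub, map_sum, map_mul, map_pow, aeval_X, aeval_C]
    refine Ideal.sub_mem _ (hg _) (Ideal.sum_mem _ fun i hi => Ideal.sum_mem _ fun j hj => ?_)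
    refine Ideal.mul_mem_right _ _ (Ideal.mul_mem_left _ _ (Ideal.pow_mem_of_mem _ ?_ _ j.succ_pos))
    exact ih i (Finset.mem_range.mp hi)

lemma frobenius_coeff_mem (p : ℕ) [Fact p.Prime] {A : Type*} [CommRing A]
    (𝔞 : Ideal A) (hp : (p : A) ∈ 𝔞) (k : ℕ) (x : WittVector p A)
    (hx : ∀ n, x.coeff n ∈ 𝔞 ^ (k + 1)) (n : ℕ) :
    (WittVector.frobenius x).coeff n ∈ 𝔞 ^ (k + 2) := by
  rw [WittVector.coeff_frobenius, WittVector.frobeniusPoly]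
  simp only [map_add, map_mul, map_pow, aeval_X, aeval_C]
  refine Ideal.add_mem _ ?_ ?_
  · have h1 : x.coeff n ^ p ∈ (𝔞 ^ (k + 1)) ^ p := Ideal.pow_mem_pow (hx n) p
    refine Set.mem_of_subset_of_mem ?_ h1
    rw [← Ideal.span_singleton_le_iff_mem] at *
    calc (𝔞 ^ (k+1)) ^ p = 𝔞 ^ ((k+1) * p) := by rw [← pow_mul]
    _ ≤ 𝔞 ^ (k + 2) := Ideal.pow_le_pow_right (by nlinarith [(Fact.out : p.Prime).two_le])
  · have : (algebraMap ℤ A) (p : ℤ) = (p : A) := by simp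
    rw [this, pow_succ']
    exact Ideal.mul_mem_mul hp (aeval_frobeniusPolyAux_mem p _ _ hx n)

/-- Let `p` be a prime, `A` a commutative ring and `𝔞 ⊆ A` a nilpotent
ideal with `p·1 ∈ 𝔞`.  Then the Frobenius of `W(A)` is elementwise nilpotent on `W(𝔞)`:
for every Witt vector all of whose components lie in `𝔞` some Frobenius iterate kills it. -/
theorem frobenius_elementwise_nilpotent
    (p : ℕ) [Fact p.Prime] (A : Type*) [CommRing A] (𝔞 : Ideal A)
    (N : ℕ) (hN : 𝔞 ^ N = ⊥) (hp : (p : A) ∈ 𝔞) :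
    ∀ x : WittVector p A, (∀ n, x.coeff n ∈ 𝔞) →
      ∃ m : ℕ, (⇑(WittVector.frobenius (p := p) (R := A)))^[m] x = 0 := by
  intro x hx
  refine ⟨N, ?_⟩
  have key : ∀ m : ℕ, ∀ n,
      ((⇑(WittVector.frobenius (p := p) (R := A)))^[m] x).coeff n ∈ 𝔞 ^ (m + 1) := by
    intro m
    induction m with
    | zero => simpa using hx
    | succ m ih =>
      intro n
      rw [Function.iterate_succ_apply']
      exact frobenius_coeff_mem p 𝔞 hp m _ ih n
  ext n
  have h := key N n
  have hle : 𝔞 ^ (N + 1) ≤ 𝔞 ^ N := Ideal.pow_le_pow_right (Nat.le_succ N)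
  rw [hN] at hle
  simpa using hle h
end

section
/- Let p be a prime, R a commutative ring, and write W = W(R), with Frobenius f, Verschiebung v, and I_R = ker(w₀ : W(R) → R). Let P, P' be W(R)-modules with submodules Q ⊆ P, Q' ⊆ P' satisfying I_R·P ⊆ Q and I_R·P' ⊆ Q'. Let F : P → P and F₁ : Q → P be additive maps with F(w·y) = f(w)·F(y) for y ∈ P, F₁(w·x) = f(w)·F₁(x) for x ∈ Q, and F₁(v(w)·y) = w·F(y) for all w ∈ W(R), y ∈ P; let F', F₁' be maps on P', Q' satisfying the analogous identities. Let α : P × P' → W(R) be W(R)-bilinear and suppose v(α(F₁x, F₁'x')) = α(x, x') for all x ∈ Q, x' ∈ Q'. Then for all x ∈ Q, x' ∈ Q', y ∈ P, y' ∈ P': (a) α(F₁x, F'y') = f(α(x, y')); (b) α(Fy, F₁'x') = f(α(y, x')); (c) α(Fy, F'y') = p·f(α(y, y')). -/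
lemma versch_inj {p : ℕ} [hp : Fact p.Prime] {R : Type*} [CommRing R]
    (a b : WittVector p R) (h : WittVector.verschiebung a = WittVector.verschiebung b) :
    a = b := by
  ext n
  have := congrArg (fun x : WittVector p R => x.coeff (n + 1)) h
  simpa [WittVector.verschiebung_coeff_add_one] using this

lemma versch_one_mul {p : ℕ} [hp : Fact p.Prime] {R : Type*} [CommRing R]
    (a : WittVector p R) :
    WittVector.verschiebung (1 : WittVector p R) * a =
      WittVector.verschiebung (WittVector.frobenius a) := by
  rw [← WittVector.verschiebung_mul_frobenius, one_mul]

/-- Bilinear-form identities for (Dieudonné-)display-like data.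
Given `W(R)`-modules `P, P'` with submodules `Q ⊇ I_R·P`, `Q' ⊇ I_R·P'`, semilinear
operators `F, F₁` and `F', F₁'` satisfying the display axioms, and a `W(R)`-bilinear
form `α : P × P' → W(R)` with `v(α(F₁x, F₁'x')) = α(x, x')` for `x ∈ Q`, `x' ∈ Q'`,
we have: (a) `α(F₁x, F'y') = f(α(x, y'))`; (b) `α(Fy, F₁'x') = f(α(y, x'))`;
(c) `α(Fy, F'y') = p·f(α(y, y'))`. -/
theorem bilinear_form_identities
    (p : ℕ) [Fact p.Prime] (R : Type*) [CommRing R]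
    (P P' : Type*) [AddCommGroup P] [AddCommGroup P']
    [Module (WittVector p R) P] [Module (WittVector p R) P']
    (Q : Submodule (WittVector p R) P) (Q' : Submodule (WittVector p R) P')
    (hQ : ∀ (w : WittVector p R) (y : P), w.coeff 0 = 0 → w • y ∈ Q)
    (hQ' : ∀ (w : WittVector p R) (y' : P'), w.coeff 0 = 0 → w • y' ∈ Q')
    (F : P →+ P) (F₁ : Q →+ P)
    (hF : ∀ (w : WittVector p R) (y : P), F (w • y) = WittVector.frobenius w • F y)
    (hF₁ : ∀ (w : WittVector p R) (x : Q), F₁ (w • x) = WittVector.frobenius w • F₁ x)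
    (hFF₁ : ∀ (w : WittVector p R) (y : P) (h : WittVector.verschiebung w • y ∈ Q),
      F₁ ⟨WittVector.verschiebung w • y, h⟩ = w • F y)
    (F' : P' →+ P') (F₁' : Q' →+ P')
    (hF' : ∀ (w : WittVector p R) (y' : P'),
      F' (w • y') = WittVector.frobenius w • F' y')
    (hF₁' : ∀ (w : WittVector p R) (x' : Q'),
      F₁' (w • x') = WittVector.frobenius w • F₁' x')
    (hFF₁' : ∀ (w : WittVector p R) (y' : P')
        (h : WittVector.verschiebung w • y' ∈ Q'),
      F₁' ⟨WittVector.verschiebung w • y', h⟩ = w • F' y')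
    (α : P →ₗ[WittVector p R] P' →ₗ[WittVector p R] WittVector p R)
    (hα : ∀ (x : Q) (x' : Q'),
      WittVector.verschiebung (α (F₁ x) (F₁' x')) = α (x : P) (x' : P')) :
    (∀ (x : Q) (y' : P'),
      α (F₁ x) (F' y') = WittVector.frobenius (α (x : P) y')) ∧
    (∀ (y : P) (x' : Q'),
      α (F y) (F₁' x') = WittVector.frobenius (α y (x' : P'))) ∧
    (∀ (y : P) (y' : P'),
      α (F y) (F' y') = (p : WittVector p R) * WittVector.frobenius (α y y')) := by
  have ha : ∀ (x : Q) (y' : P'),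
      α (F₁ x) (F' y') = WittVector.frobenius (α (x : P) y') := by
    intro x y'
    have hmem : WittVector.verschiebung (1 : WittVector p R) • y' ∈ Q' := hQ' _ _ (WittVector.verschiebung_coeff_zero 1)
    have h1 := hα x ⟨WittVector.verschiebung (1 : WittVector p R) • y', hmem⟩
    rw [hFF₁' 1 y' hmem, one_smul] at h1
    apply versch_inj
    rw [h1]
    simp only [map_smul, smul_eq_mul]
    rw [versch_one_mul]
  have hb : ∀ (y : P) (x' : Q'),
      α (F y) (F₁' x') = WittVector.frobenius (α y (x' : P')) := by
    intro y x'
    have hmem : WittVector.verschiebung (1 : WittVector p R) • y ∈ Q := hQ _ _ (WittVector.verschiebung_coeff_zero 1)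
    have h1 := hα ⟨WittVector.verschiebung (1 : WittVector p R) • y, hmem⟩ x'
    rw [hFF₁ 1 y hmem, one_smul] at h1
    apply versch_inj
    rw [h1]
    simp only [map_smul, LinearMap.smul_apply, smul_eq_mul]
    rw [versch_one_mul]
  refine ⟨ha, hb, ?_⟩
  intro y y'
  have hmem : WittVector.verschiebung (1 : WittVector p R) • y' ∈ Q' := hQ' _ _ (WittVector.verschiebung_coeff_zero 1)
  have h1 := hb y ⟨WittVector.verschiebung (1 : WittVector p R) • y', hmem⟩
  rw [hFF₁' 1 y' hmem, one_smul] at h1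
  rw [h1]
  simp only [map_smul, smul_eq_mul]
  rw [versch_one_mul, WittVector.frobenius_verschiebung, mul_comm]
end

section
/- Let p be a prime, k an algebraically closed field of characteristic p, and P a finite free module over W(k). Let Φ : P → P be an additive bijection that is Frobenius-semilinear: Φ(c·x) = f(c)·Φ(x) for all c ∈ W(k), x ∈ P. Then Φ − id : P → P is surjective, and the fixed-point set ker(Φ − id) = { x ∈ P : Φ(x) = x } generates P as a W(k)-module. -/
open Polynomial
set_option linter.unusedSectionVars false
set_option maxHeartbeats 4000000

namespace FixedPointsAux

section FieldLemmas
variable {p : ℕ} [Fact p.Prime] {k : Type*} [Field k] [CharP k p] [IsAlgClosed k]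
open Polynomial


lemma exists_root_of_coeff_ne (f : k[X]) (n : ℕ) (hn : n ≠ 0) (h : f.coeff n ≠ 0) :
    ∃ t, f.eval t = 0 := by
  refine IsAlgClosed.exists_root _ ?_
  have hf : f ≠ 0 := fun h0 => by simp [h0] at h
  have h1 : 1 ≤ f.natDegree := le_trans (Nat.one_le_iff_ne_zero.mpr hn) (le_natDegree_of_ne_zero h)
  rw [Polynomial.degree_eq_natDegree hf]
  intro hd
  have : f.natDegree = 0 := by exact_mod_cast hd
  omega

lemma artin_schreier (a : k) : ∃ t : k, t ^ p - t = a := by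
  have hp : 1 < p := (Fact.out : p.Prime).one_lt
  obtain ⟨t, ht⟩ := exists_root_of_coeff_ne (X ^ p - X - C a) p (by omega) (by
    rw [coeff_sub, coeff_sub, coeff_X, coeff_C, if_neg (by omega : ¬(1 = p)),
      if_neg (by omega : ¬(p = 0)), coeff_X_pow, if_pos rfl]
    norm_num)
  refine ⟨t, ?_⟩
  simp only [eval_sub, eval_pow, eval_X, eval_C] at ht
  exact sub_eq_zero.mp ht

lemma coeff_pow_char (f : k[X]) (n : ℕ) :
    (f ^ p).coeff n = if p ∣ n then (f.coeff (n / p)) ^ p else 0 := by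
  rw [← Polynomial.map_frobenius_expand p, Polynomial.coeff_map, Polynomial.coeff_expand
    (Fact.out : p.Prime).pos]
  split <;> simp [frobenius_def, (Fact.out : p.Prime).ne_zero]

lemma pth_root (a : k) : ∃ b : k, b ^ p = a :=
  ⟨(frobeniusEquiv k p).symm a, by
    have := (frobeniusEquiv k p).apply_symm_apply a
    rwa [frobeniusEquiv_apply, frobenius_def] at this⟩

instance : RingHomSurjective (frobenius k p) :=
  ⟨fun a => by obtain ⟨b, hb⟩ := pth_root (p := p) a; exact ⟨b, by rw [frobenius_def, hb]⟩⟩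

variable {V : Type*} [AddCommGroup V] [Module k V]

lemma indep_map {ι : Type*} [Fintype ι] {u : ι → V}
    (φ : V →ₛₗ[frobenius k p] V) (hinj : Function.Injective φ)
    (hu : LinearIndependent k u) : LinearIndependent k (fun i => φ (u i)) := by
  rw [Fintype.linearIndependent_iff] at hu ⊢
  intro c hc
  choose b hb using fun i => pth_root (p := p) (c i)
  have h1 : ∀ i, c i • φ (u i) = φ (b i • u i) := fun i => by
    rw [LinearMap.map_smulₛₗ, frobenius_def, hb]
  rw [Finset.sum_congr rfl (fun i _ => h1 i), ← map_sum] at hc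
  have h2 : ∑ i, b i • u i = 0 := hinj (by rw [hc, map_zero])
  intro i
  rw [← hb i, hu b h2 i, zero_pow (Fact.out : p.Prime).ne_zero]

lemma map_stable_eq [FiniteDimensional k V] (φ : V →ₛₗ[frobenius k p] V)
    (hinj : Function.Injective φ) (S : Submodule k V)
    (hle : Submodule.map φ S ≤ S) : Submodule.map φ S = S := by
  classical
  set n := Module.finrank k S with hn
  let b := Module.finBasis k S
  have hbi : LinearIndependent k (fun i => (b i : V)) :=
    b.linearIndependent.map' S.subtype S.ker_subtype
  have hSspan : S = Submodule.span k (Set.range fun i => (b i : V)) := by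
    have h1 : Submodule.span k (Set.range fun i => (b i : V)) =
        Submodule.map S.subtype (Submodule.span k (Set.range b)) := by
      rw [Submodule.map_span]
      congr 1
      rw [← Set.range_comp]
      rfl
    rw [h1, b.span_eq, Submodule.map_subtype_top]
  have hmap : Submodule.map φ S = Submodule.span k (Set.range fun i => φ (b i : V)) := by
    have h2 := congrArg (Submodule.map φ) hSspan
    rw [Submodule.map_span] at h2
    rw [h2]
    congr 1
    rw [← Set.range_comp]
    rfl
  have hfr1 : Module.finrank k (Submodule.map φ S) = n := by
    rw [hmap, finrank_span_eq_card (indep_map φ hinj hbi), Fintype.card_fin]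
  refine Submodule.eq_of_le_of_finrank_le hle ?_
  rw [hfr1]

lemma one_fixed [FiniteDimensional k V] [Nontrivial V] (φ : V →ₛₗ[frobenius k p] V)
    (hbij : Function.Bijective φ) : ∃ w : V, w ≠ 0 ∧ φ w = w := by
  classical
  have hp1 : 1 < p := (Fact.out : p.Prime).one_lt
  obtain ⟨v, hv⟩ := exists_ne (0 : V)
  set g : ℕ → V := fun n => (⇑φ)^[n] v with hg_def
  have hg0 : g 0 = v := rfl
  have hgS : ∀ n, φ (g n) = g (n + 1) := fun n => (Function.iterate_succ_apply' _ _ _).symm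
  have hrange : ∀ m : ℕ, Set.range (fun i : Fin m => g i) = g '' Set.Iio m := by
    intro m; ext x; constructor
    · rintro ⟨i, rfl⟩; exact ⟨i, i.isLt, rfl⟩
    · rintro ⟨j, hj, rfl⟩; exact ⟨⟨j, hj⟩, rfl⟩
  set Q : ℕ → Prop := fun n => g n ∈ Submodule.span k (g '' Set.Iio n) with hQ_def
  have claim : ∀ m, (∀ j, j < m → ¬ Q j) → LinearIndependent k (fun i : Fin m => g i) := by
    intro m; induction m with
    | zero => intro _; exact linearIndependent_empty_type
    | succ m ih =>
      intro h
      have hsnoc : (fun i : Fin (m+1) => g i) = Fin.snoc (fun i : Fin m => g i) (g m) := by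
        funext i
        refine Fin.lastCases ?_ ?_ i
        · simp
        · intro j; simp
      rw [hsnoc, linearIndependent_fin_snoc]
      refine ⟨ih (fun j hj => h j (by omega)), ?_⟩
      rw [hrange]
      exact h m (by omega)
  have hQex : ∃ n, Q n := by
    by_contra hno
    push_neg at hno
    have hli := claim (Module.finrank k V + 1) (fun j _ => hno j)
    have hcard := hli.fintype_card_le_finrank
    simp at hcard
  set r := Nat.find hQex with hr_def
  have hQr : Q r := Nat.find_spec hQex
  have hmin : ∀ m, m < r → ¬ Q m := fun m hm => Nat.find_min hQex hm
  have hindep : LinearIndependent k (fun i : Fin r => g i) := claim r hmin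
  have hr1 : 1 ≤ r := by
    rcases Nat.eq_zero_or_pos r with h0 | h
    · exfalso
      rw [h0] at hQr
      simp only [hQ_def] at hQr
      rw [show Set.Iio (0:ℕ) = ∅ from by ext x; simp, Set.image_empty,
        Submodule.span_empty] at hQr
      exact hv (by simpa [hg0] using hQr)
    · exact h
  have hQr' : g r ∈ Submodule.span k (Set.range fun i : Fin r => g i) := by
    rw [hrange]; exact hQr
  obtain ⟨a, ha⟩ := (Submodule.mem_span_range_iff_exists_fun k).mp hQr'
  set A : ℕ → k := fun i => if h : i < r then a ⟨i, h⟩ else 0 with hA_def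
  have haA : ∑ i ∈ Finset.range r, A i • g i = g r := by
    rw [← Fin.sum_univ_eq_sum_range (fun i => A i • g i) r, ← ha]
    refine Finset.sum_congr rfl (fun i _ => ?_)
    simp [hA_def, i.isLt]
  have hA0 : A 0 ≠ 0 := by
    intro h0
    choose b hb using fun i : ℕ => pth_root (p := p) (k := k) (A (i+1))
    have hu : φ (∑ i ∈ Finset.range (r-1), b i • g i) = g r := by
      rw [map_sum]
      have hterm : ∀ i ∈ Finset.range (r-1), φ (b i • g i) = A (i+1) • g (i+1) := by
        intro i _
        rw [LinearMap.map_smulₛₗ, hgS, frobenius_def, hb]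
      rw [Finset.sum_congr rfl hterm]
      have h2 := haA
      rw [show r = (r-1)+1 from (Nat.succ_pred_eq_of_pos hr1).symm,
        Finset.sum_range_succ'] at h2
      rw [show (r-1)+1 = r from Nat.succ_pred_eq_of_pos hr1] at h2
      rw [h0, zero_smul, add_zero] at h2
      exact h2
    have hgr1 : φ (g (r-1)) = g r := by
      rw [hgS]; congr 1; omega
    have heq : ∑ i ∈ Finset.range (r-1), b i • g i = g (r-1) := hbij.1 (hu.trans hgr1.symm)
    have hmem : g (r-1) ∈ Submodule.span k (g '' Set.Iio (r-1)) := by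
      rw [← heq]
      refine Submodule.sum_mem _ (fun i hi => Submodule.smul_mem _ _ (Submodule.subset_span ?_))
      exact ⟨i, by simp only [Set.mem_Iio]; simp at hi; omega, rfl⟩
    exact hmin (r-1) (by omega) hmem
  -- the polynomial chain
  set c : ℕ → k[X] := fun n =>
    Nat.rec (C (A 0) * X ^ p) (fun i ih => ih ^ p + C (A (i+1)) * X ^ p) n with hc_def
  have hc0 : c 0 = C (A 0) * X ^ p := rfl
  have hcS : ∀ i, c (i+1) = (c i) ^ p + C (A (i+1)) * X ^ p := fun i => rfl
  have F2 : ∀ i, (c i).coeff 0 = 0 := by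
    intro i; induction i with
    | zero =>
      rw [hc0, coeff_C_mul, coeff_X_pow, if_neg (by omega : ¬ (0 = p)), mul_zero]
    | succ i ih =>
      rw [hcS, coeff_add, coeff_pow_char (p := p), if_pos (dvd_zero p), Nat.zero_div, ih,
        zero_pow (by omega : p ≠ 0), coeff_C_mul, coeff_X_pow, if_neg (by omega : ¬ (0 = p)),
        mul_zero, add_zero]
  have F1 : ∀ i, (c i).coeff 1 = 0 := by
    intro i; induction i with
    | zero =>
      rw [hc0, coeff_C_mul, coeff_X_pow, if_neg (by omega : ¬ (1 = p)), mul_zero]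
    | succ i ih =>
      rw [hcS, coeff_add, coeff_pow_char (p := p), if_neg (by rw [Nat.dvd_one]; omega),
        coeff_C_mul, coeff_X_pow, if_neg (by omega : ¬ (1 = p)), mul_zero, add_zero]
  have F3 : ∀ i, (c i).coeff (p ^ (i+1)) = A 0 ^ (p ^ i) := by
    intro i; induction i with
    | zero => rw [hc0]; simp [coeff_X_pow]
    | succ i ih =>
      rw [hcS, coeff_add, coeff_pow_char (p := p),
        if_pos (dvd_pow_self p (by omega : i + 2 ≠ 0))]
      have hdiv : p ^ (i+2) / p = p ^ (i+1) := by
        rw [pow_succ p (i+1)]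
        exact Nat.mul_div_cancel _ (by omega)
      rw [hdiv, ih, coeff_C_mul, coeff_X_pow,
        if_neg (by
          have hlt : p ^ 1 < p ^ (i+1+1) := Nat.pow_lt_pow_right hp1 (by omega)
          rw [pow_one] at hlt
          omega), mul_zero, add_zero, ← pow_mul, ← pow_succ]
  -- the root
  set q : k[X] := c (r-1) - X with hq_def
  have hq0 : q.coeff 0 = 0 := by
    rw [hq_def, coeff_sub, F2, coeff_X_zero, sub_zero]
  obtain ⟨Qp, hQp⟩ := Polynomial.X_dvd_iff.mpr hq0
  have hq1 : q.coeff 1 = -1 := by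
    rw [hq_def, coeff_sub, F1, coeff_X_one, zero_sub]
  have hQ0 : Qp.coeff 0 = -1 := by
    rw [hQp] at hq1
    rwa [show (1:ℕ) = 0 + 1 from rfl, Polynomial.coeff_X_mul] at hq1
  have hpr2 : 2 ≤ p ^ r := le_trans hp1 (by
    calc p = p ^ 1 := (pow_one p).symm
    _ ≤ p ^ r := Nat.pow_le_pow_right (by omega) hr1)
  have hqtop : q.coeff (p ^ r) = A 0 ^ (p ^ (r-1)) := by
    have h3 := F3 (r-1)
    rw [show r - 1 + 1 = r from by omega] at h3
    rw [hq_def, coeff_sub, h3, coeff_X, if_neg (by omega), sub_zero]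
  have hQtop : Qp.coeff (p ^ r - 1) ≠ 0 := by
    have hsucc : p ^ r = (p ^ r - 1) + 1 := by omega
    rw [hQp, hsucc, Polynomial.coeff_X_mul] at hqtop
    rw [hqtop]
    exact pow_ne_zero _ hA0
  obtain ⟨t, htQ⟩ := exists_root_of_coeff_ne Qp (p ^ r - 1) (by omega) hQtop
  have ht0 : t ≠ 0 := by
    rintro rfl
    rw [← Polynomial.coeff_zero_eq_eval_zero, hQ0] at htQ
    exact (by norm_num : (-1 : k) ≠ 0) htQ
  have hqt : (c (r-1)).eval t = t := by
    have h4 : q.eval t = 0 := by rw [hQp, eval_mul, htQ, mul_zero]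
    rw [hq_def, eval_sub, eval_X] at h4
    exact sub_eq_zero.mp h4
  -- the fixed vector
  set e : ℕ → k := fun i => (c i).eval t with he_def
  have he0 : e 0 = A 0 * t ^ p := by simp [he_def, hc0]
  have heS : ∀ i, e (i+1) = e i ^ p + A (i+1) * t ^ p := fun i => by
    simp [he_def, hcS]
  have het : e (r-1) = t := hqt
  refine ⟨∑ i ∈ Finset.range r, e i • g i, ?_, ?_⟩
  · intro hw0
    rw [← Fin.sum_univ_eq_sum_range (fun i => e i • g i) r] at hw0
    have h5 := Fintype.linearIndependent_iff.mp hindep (fun i => e (i : ℕ)) hw0 ⟨r-1, by omega⟩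
    simp only at h5
    rw [het] at h5
    exact ht0 h5
  · set E : ℕ → k := fun j => Nat.rec 0 (fun i _ => e i ^ p) j with hE_def
    have hE0 : E 0 = 0 := rfl
    have hES : ∀ i, E (i+1) = e i ^ p := fun i => rfl
    have step1 : φ (∑ i ∈ Finset.range r, e i • g i)
        = ∑ i ∈ Finset.range r, E (i+1) • g (i+1) := by
      rw [map_sum]
      exact Finset.sum_congr rfl fun i _ => by
        rw [LinearMap.map_smulₛₗ, hgS, frobenius_def, hES]
    have step2 : ∑ i ∈ Finset.range r, E (i+1) • g (i+1)
        = ∑ i ∈ Finset.range (r+1), E i • g i := by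
      rw [Finset.sum_range_succ' (fun i => E i • g i) r, hE0, zero_smul, add_zero]
    have hEr : E r = t ^ p := by
      rw [show r = (r-1)+1 from by omega, hES, het]
    have step3 : ∑ i ∈ Finset.range (r+1), E i • g i
        = ∑ i ∈ Finset.range r, E i • g i + (t ^ p) • g r := by
      rw [Finset.sum_range_succ, hEr]
    have step4 : (t ^ p) • g r = ∑ i ∈ Finset.range r, (t ^ p * A i) • g i := by
      rw [← haA, Finset.smul_sum]
      exact Finset.sum_congr rfl fun i _ => (smul_smul _ _ _)
    rw [step1, step2, step3, step4, ← Finset.sum_add_distrib]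
    refine Finset.sum_congr rfl (fun i _ => ?_)
    rw [← add_smul]
    congr 1
    cases i with
    | zero => rw [hE0, zero_add, he0, mul_comm]
    | succ j => rw [hES, heS, mul_comm (A (j+1)) (t ^ p)]

lemma solve_in_span (φ : V →ₛₗ[frobenius k p] V)
    {s : V} (hs : s ∈ Submodule.span k {x : V | φ x = x}) :
    ∃ u ∈ Submodule.span k {x : V | φ x = x}, φ u - u = s := by
  classical
  obtain ⟨c, hsupp, hsum⟩ := Submodule.mem_span_set.mp hs
  choose D hD using fun r : k => artin_schreier (p := p) (k := k) r
  refine ⟨c.sum fun m r => D r • m, ?_, ?_⟩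
  · refine Submodule.sum_mem _ (fun m hm => Submodule.smul_mem _ _ (Submodule.subset_span ?_))
    exact hsupp hm
  · have hfix : ∀ m ∈ c.support, φ m = m := fun m hm => hsupp hm
    rw [Finsupp.sum]
    rw [map_sum]
    have h1 : ∀ m ∈ c.support, φ (D (c m) • m) = (D (c m)) ^ p • m := by
      intro m hm
      rw [LinearMap.map_smulₛₗ, frobenius_def, hfix m hm]
    rw [Finset.sum_congr rfl h1, ← Finset.sum_sub_distrib]
    rw [← hsum, Finsupp.sum]
    refine Finset.sum_congr rfl (fun m hm => ?_)
    rw [← sub_smul, hD]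

lemma fixed_span [FiniteDimensional k V] (φ : V →ₛₗ[frobenius k p] V)
    (hbij : Function.Bijective φ) :
    Submodule.span k {x : V | φ x = x} = ⊤ := by
  classical
  by_contra hne
  set S := Submodule.span k {x : V | φ x = x} with hS_def
  have hlt : S < ⊤ := lt_top_iff_ne_top.mpr hne
  haveI : Nontrivial (V ⧸ S) := Submodule.Quotient.nontrivial_iff.mpr hlt.ne
  have hstab : Submodule.map φ S ≤ S := by
    rw [hS_def, Submodule.map_span]
    refine Submodule.span_le.mpr ?_
    rintro y ⟨x, hx, rfl⟩
    have : φ x = x := hx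
    rw [this]
    exact Submodule.subset_span hx
  have heqS : Submodule.map φ S = S := map_stable_eq φ hbij.1 S hstab
  set φq : V ⧸ S →ₛₗ[frobenius k p] V ⧸ S :=
    Submodule.mapQ S S φ (Submodule.map_le_iff_le_comap.mp hstab) with hφq
  have hq_mk : ∀ x : V, φq (Submodule.Quotient.mk x) = Submodule.Quotient.mk (φ x) :=
    fun x => by simp only [hφq, Submodule.mapQ_apply]
  have hqsurj : Function.Surjective φq := by
    intro y
    obtain ⟨x, rfl⟩ := Submodule.Quotient.mk_surjective S y
    obtain ⟨x', hx'⟩ := hbij.2 x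
    exact ⟨Submodule.Quotient.mk x', by rw [hq_mk, hx']⟩
  have hqinj : Function.Injective φq := by
    rw [injective_iff_map_eq_zero]
    intro y hy
    obtain ⟨x, rfl⟩ := Submodule.Quotient.mk_surjective S y
    rw [hq_mk, Submodule.Quotient.mk_eq_zero] at hy
    rw [← heqS] at hy
    obtain ⟨x', hx'S, hx'⟩ := hy
    rw [Submodule.Quotient.mk_eq_zero]
    rw [← hbij.1 hx']
    exact hx'S
  obtain ⟨wq, hwq0, hwqfix⟩ := one_fixed φq ⟨hqinj, hqsurj⟩
  obtain ⟨x, rfl⟩ := Submodule.Quotient.mk_surjective S wq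
  have hdiff : φ x - x ∈ S := by
    rw [← Submodule.Quotient.mk_eq_zero, Submodule.Quotient.mk_sub, ← hq_mk, hwqfix, sub_self]
  obtain ⟨u, huS, hu⟩ := solve_in_span φ (show -(φ x - x) ∈ _ from Submodule.neg_mem _ hdiff)
  have hfix : φ (x + u) = x + u := by
    rw [map_add]
    have h5 : φ u = -(φ x - x) + u := sub_eq_iff_eq_add.mp hu
    rw [h5]; abel
  have hxu : x + u ∈ S := Submodule.subset_span (hfix : _)
  have hxS : x ∈ S := by
    have := Submodule.sub_mem S hxu huS
    simpa using this
  exact hwq0 ((Submodule.Quotient.mk_eq_zero S).mpr hxS)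

lemma surj_sub_one [FiniteDimensional k V] (φ : V →ₛₗ[frobenius k p] V)
    (hbij : Function.Bijective φ) (y : V) : ∃ u : V, φ u - u = y := by
  obtain ⟨u, _, hu⟩ := solve_in_span φ (s := y) (by rw [fixed_span φ hbij]; trivial)
  exact ⟨u, hu⟩

end FieldLemmas


namespace WittAux
open WittVector
variable {p : ℕ} [hp : Fact p.Prime] {k : Type*} [Field k] [CharP k p] [IsAlgClosed k]

local notation "W" => WittVector p k

lemma iter_versch_coeff_lt (n : ℕ) (z : W) : ∀ i : ℕ, i < n →
    ((verschiebung)^[n] z).coeff i = 0 := by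
  induction n with
  | zero => omega
  | succ n ih =>
    intro i hi
    rw [Function.iterate_succ_apply']
    cases i with
    | zero => exact verschiebung_coeff_zero _
    | succ j => rw [verschiebung_coeff_succ]; exact ih j (by omega)

lemma iter_versch_coeff_add (n : ℕ) (z : W) (i : ℕ) :
    ((verschiebung)^[n] z).coeff (i + n) = z.coeff i := by
  induction n with
  | zero => simp
  | succ n ih =>
    rw [Function.iterate_succ_apply', show i + (n+1) = (i+n)+1 from rfl,
      verschiebung_coeff_succ, ih]

lemma p_pow_mul_eq (n : ℕ) (z : W) :
    (p : W) ^ n * z = (verschiebung)^[n] ((frobenius)^[n] z) := by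
  induction n generalizing z with
  | zero => simp
  | succ n ih =>
    have h1 : (p : W) ^ (n+1) * z = (p : W) ^ n * ((p : W) * z) := by ring
    have h2 : (p : W) * z = verschiebung (frobenius z) := by
      rw [verschiebung_frobenius, mul_comm]
    rw [h1, h2, ih]
    have h3 : (frobenius)^[n] (verschiebung (frobenius z))
        = verschiebung ((frobenius)^[n] (frobenius z)) := by
      have := (verschiebung_frobenius_comm (p := p) (R := k)).iterate_right n
      exact (this (frobenius z)).symm
    rw [h3, ← Function.iterate_succ_apply verschiebung, ← Function.iterate_succ_apply frobenius]

lemma dvd_iff_truncate (n : ℕ) (x : W) : (p : W) ^ n ∣ x ↔ truncate n x = 0 := by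
  constructor
  · rintro ⟨z, rfl⟩
    have : ((p : W) ^ n * z) ∈ RingHom.ker (truncate (p := p) n) := by
      rw [mem_ker_truncate]
      intro i hi
      rw [p_pow_mul_eq]
      exact iter_versch_coeff_lt n _ i hi
    rwa [RingHom.mem_ker] at this
  · intro h
    have hc : ∀ i < n, x.coeff i = 0 := (mem_ker_truncate n x).mp (by rwa [RingHom.mem_ker])
    have hxy : (verschiebung)^[n] (WittVector.mk p (fun m => x.coeff (m + n))) = x := by
      apply WittVector.ext
      intro m
      rcases lt_or_ge m n with hm | hm
      · rw [iter_versch_coeff_lt n _ m hm, hc m hm]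
      · have hmn : m = (m - n) + n := by omega
        rw [hmn, iter_versch_coeff_add]
        rw [show (WittVector.mk p fun m => x.coeff (m + n)).coeff = fun m => x.coeff (m+n)
          from coeff_mk (p := p) _]
    obtain ⟨z, hz⟩ := ((frobenius_bijective p k).surjective.iterate n)
      (WittVector.mk p (fun m => x.coeff (m + n)))
    exact ⟨z, by rw [p_pow_mul_eq, hz, hxy]⟩

lemma dvd_sub_iff (n : ℕ) (a b : W) :
    (p : W) ^ n ∣ a - b ↔ truncate n a = truncate n b := by
  rw [dvd_iff_truncate, map_sub, sub_eq_zero]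

lemma eq_zero_of_forall_dvd (x : W) (h : ∀ n, (p : W) ^ n ∣ x) : x = 0 := by
  apply WittVector.ext
  intro m
  have := (mem_ker_truncate (m+1) x).mp
    (by rw [RingHom.mem_ker]; exact (dvd_iff_truncate (m+1) x).mp (h (m+1)))
  rw [this m (by omega), WittVector.zero_coeff]

lemma exists_limit (c : ℕ → W) (hc : ∀ n, (p : W) ^ n ∣ c (n+1) - c n) :
    ∃ L, ∀ n, (p : W) ^ n ∣ L - c n := by
  have htr : ∀ n, truncate n (c (n+1)) = truncate n (c n) := fun n =>
    (dvd_sub_iff n _ _).mp (hc n)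
  have hstab : ∀ m j, m < j → (c j).coeff m = (c (m+1)).coeff m := by
    intro m j
    induction j with
    | zero => omega
    | succ j ih =>
      intro hj
      rcases Nat.lt_or_ge m j with hmj | hmj
      · rw [← ih hmj]
        have h4 := congrArg (fun t => TruncatedWittVector.coeff ⟨m, hmj⟩ t) (htr j)
        simpa only [coeff_truncate] using h4
      · have : m + 1 = j + 1 := by omega
        rw [this]
  refine ⟨WittVector.mk p (fun m => (c (m+1)).coeff m), fun n => ?_⟩
  rw [dvd_sub_iff]
  apply TruncatedWittVector.ext
  intro i
  rw [coeff_truncate, coeff_truncate]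
  rw [show (WittVector.mk p fun m => (c (m+1)).coeff m).coeff = fun m => (c (m+1)).coeff m
    from coeff_mk (p := p) _]
  exact (hstab i n i.isLt).symm

-- the residue map and frobenius
lemma constantCoeff_frobenius (x : W) :
    WittVector.constantCoeff (frobenius x) = (WittVector.constantCoeff x) ^ p := by
  rw [WittVector.constantCoeff_apply, WittVector.constantCoeff_apply, coeff_frobenius_charP]

lemma constantCoeff_surjective :
    Function.Surjective (WittVector.constantCoeff : W →+* k) := fun a =>
  ⟨WittVector.teichmuller p a, by rw [WittVector.constantCoeff_apply, teichmuller_coeff_zero]⟩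

lemma p_dvd_iff_constantCoeff (x : W) :
    (p : W) ∣ x ↔ WittVector.constantCoeff x = 0 := by
  have h := dvd_iff_truncate (p := p) (k := k) 1 x
  rw [pow_one] at h
  rw [h]
  constructor
  · intro h1
    have := (mem_ker_truncate 1 x).mp (by rwa [RingHom.mem_ker])
    rw [WittVector.constantCoeff_apply]
    exact this 0 (by omega)
  · intro h1
    have : x ∈ RingHom.ker (truncate (p := p) 1) := by
      rw [mem_ker_truncate]
      intro i hi
      rw [show i = 0 from by omega]
      rwa [WittVector.constantCoeff_apply] at h1
    rwa [RingHom.mem_ker] at this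

lemma isUnit_of_constantCoeff_ne (x : W) (h : WittVector.constantCoeff x ≠ 0) : IsUnit x :=
  WittVector.isUnit_of_coeff_zero_ne_zero x (by rwa [WittVector.constantCoeff_apply] at h)

end WittAux


end FixedPointsAux

open FixedPointsAux FixedPointsAux.WittAux

/-- Let `k` be an algebraically closed field of characteristic `p` and
`P` a finite free `W(k)`-module.  Let `Φ : P → P` be an additive bijection which is
Frobenius-semilinear.  Then `Φ − id` is surjective and the fixed points of `Φ` generate
`P` as a `W(k)`-module. -/
theorem fixed_points_generate
    (p : ℕ) [Fact p.Prime] (k : Type*) [Field k] [CharP k p] [IsAlgClosed k]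
    (P : Type*) [AddCommGroup P] [Module (WittVector p k) P]
    [Module.Finite (WittVector p k) P] [Module.Free (WittVector p k) P]
    (Φ : P →+ P) (hbij : Function.Bijective Φ)
    (hsemi : ∀ (c : WittVector p k) (x : P),
      Φ (c • x) = WittVector.frobenius c • Φ x) :
    Function.Surjective (fun x : P => Φ x - x) ∧
    Submodule.span (WittVector p k) {x : P | Φ x = x} = ⊤ := by
  classical
  set W := WittVector p k with hW
  let π : W →+* k := WittVector.constantCoeff
  set ι := Module.Free.ChooseBasisIndex W P with hι
  set B : Module.Basis ι W P := Module.Free.chooseBasis W P with hB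
  set M : Matrix ι ι W := Matrix.of fun i j => B.repr (Φ (B j)) i with hM
  -- basic computation rules
  have hΦpow : ∀ (n : ℕ) (x : P), Φ ((p : W) ^ n • x) = (p : W) ^ n • Φ x := by
    intro n x
    rw [hsemi, map_pow, map_natCast]
  have hΦp : ∀ x : P, Φ ((p : W) • x) = (p : W) • Φ x := by
    intro x; rw [hsemi, map_natCast]
  have hrepr : ∀ (x : P) (i : ι), B.repr (Φ x) i
      = ∑ j, M i j * WittVector.frobenius (B.repr x j) := by
    intro x i
    have h1 : Φ x = ∑ j, WittVector.frobenius (B.repr x j) • Φ (B j) := by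
      conv_lhs => rw [← B.sum_repr x]
      rw [map_sum]
      exact Finset.sum_congr rfl fun j _ => hsemi _ _
    rw [h1, map_sum, Finsupp.finset_sum_apply]
    refine Finset.sum_congr rfl fun j _ => ?_
    rw [map_smul, Finsupp.smul_apply, smul_eq_mul, mul_comm]
    rfl
  -- the residue map
  let ρ : P →+ (ι → k) :=
    { toFun := fun x i => π (B.repr x i)
      map_zero' := by funext i; simp
      map_add' := by intro a b; funext i; simp }
  have hρ_def : ∀ (x : P) (i : ι), ρ x i = π (B.repr x i) := fun _ _ => rfl
  have hρsurj : Function.Surjective ρ := by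
    intro v
    refine ⟨∑ i, WittVector.teichmuller p (v i) • B i, funext fun i => ?_⟩
    have h0 : ⇑(B.repr (∑ i, WittVector.teichmuller p (v i) • B i))
        = fun i => WittVector.teichmuller p (v i) := B.repr_sum_self _
    rw [hρ_def, congrFun h0 i]
    show ((WittVector.teichmuller p) (v i)).coeff 0 = v i
    rw [WittVector.teichmuller_coeff_zero]
  have hρker : ∀ x : P, ρ x = 0 → ∃ y : P, x = (p : W) • y := by
    intro x hx
    have hdvd : ∀ i, (p : W) ∣ B.repr x i := fun i =>
      (p_dvd_iff_constantCoeff _).mpr (congrFun hx i)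
    choose d hd using hdvd
    refine ⟨∑ i, d i • B i, ?_⟩
    rw [Finset.smul_sum]
    calc x = ∑ i, B.repr x i • B i := (B.sum_repr x).symm
    _ = ∑ i, (p : W) • d i • B i := by
        refine Finset.sum_congr rfl fun i _ => ?_
        rw [smul_smul, ← hd i]
  -- the matrix is invertible
  have hdet : IsUnit M.det := by
    set finv : W → W := fun c => (WittVector.frobeniusEquiv p k).symm c with hfinv
    have hfinv_frob : ∀ c, WittVector.frobenius (finv c) = c := fun c => by
      have := (WittVector.frobeniusEquiv p k).apply_symm_apply c
      rwa [WittVector.frobeniusEquiv_apply] at this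
    have hfinv_frob' : ∀ c, finv (WittVector.frobenius c) = c := fun c => by
      have := (WittVector.frobeniusEquiv p k).symm_apply_apply c
      rwa [WittVector.frobeniusEquiv_apply] at this
    have hfinv0 : finv 0 = 0 := by
      have := hfinv_frob' 0; rwa [map_zero] at this
    have hfinv1 : finv 1 = 1 := by
      have := hfinv_frob' 1; rwa [map_one] at this
    set H : P → P := fun x => ∑ j, finv (B.repr x j) • B j with hH
    have hHB : ∀ j : ι, H (B j) = B j := by
      intro j
      simp only [hH]
      have h2 : ∀ j' : ι, B.repr (B j) j' = if j = j' then 1 else 0 := by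
        intro j'
        rw [B.repr_self]
        rw [Finsupp.single_apply]
      calc ∑ j', finv (B.repr (B j) j') • B j'
          = ∑ j' : ι, (if j = j' then (1:W) else 0) • B j' := by
            refine Finset.sum_congr rfl fun j' _ => ?_
            rw [h2 j']
            by_cases h : j = j' <;> simp [h, hfinv0, hfinv1]
      _ = B j := by simp
    have hHbij : Function.Bijective H := by
      set G : P → P := fun x => ∑ j, WittVector.frobenius (B.repr x j) • B j with hG
      refine Function.bijective_iff_has_inverse.mpr ⟨G, fun x => ?_, fun x => ?_⟩
      · -- G (H x) = x
        simp only [hH, hG]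
        have h3 : ⇑(B.repr (∑ j, finv (B.repr x j) • B j)) = fun j => finv (B.repr x j) :=
          B.repr_sum_self _
        calc ∑ j, WittVector.frobenius ((B.repr (∑ j', finv (B.repr x j') • B j')) j) • B j
            = ∑ j, B.repr x j • B j := by
              refine Finset.sum_congr rfl fun j _ => ?_
              rw [congrFun h3 j, hfinv_frob]
        _ = x := B.sum_repr x
      · simp only [hG, hH]
        have h3 : ⇑(B.repr (∑ j, WittVector.frobenius (B.repr x j) • B j))
            = fun j => WittVector.frobenius (B.repr x j) := B.repr_sum_self _
        calc ∑ j, finv ((B.repr (∑ j', WittVector.frobenius (B.repr x j') • B j')) j) • B j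
            = ∑ j, B.repr x j • B j := by
              refine Finset.sum_congr rfl fun j _ => ?_
              rw [congrFun h3 j, hfinv_frob']
        _ = x := B.sum_repr x
    have hHadd : ∀ x y : P, H (x + y) = H x + H y := by
      intro x y
      simp only [hH]
      simp only [map_add, Finsupp.add_apply]
      rw [← Finset.sum_add_distrib]
      refine Finset.sum_congr rfl fun j _ => ?_
      rw [show finv (B.repr x j + B.repr y j) = finv (B.repr x j) + finv (B.repr y j) from
        map_add (WittVector.frobeniusEquiv p k).symm _ _, add_smul]
    have hHsmul : ∀ (c : W) (x : P), H (c • x) = finv c • H x := by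
      intro c x
      simp only [hH]
      rw [Finset.smul_sum]
      refine Finset.sum_congr rfl fun j _ => ?_
      rw [map_smul, Finsupp.smul_apply, smul_eq_mul,
        show finv (c * B.repr x j) = finv c * finv (B.repr x j) from
          map_mul (WittVector.frobeniusEquiv p k).symm _ _, smul_smul]
    set ψ : P →ₗ[W] P :=
      { toFun := fun x => Φ (H x)
        map_add' := by
          intro x y
          show Φ (H (x + y)) = Φ (H x) + Φ (H y)
          rw [hHadd, map_add]
        map_smul' := by
          intro c x
          show Φ (H (c • x)) = c • Φ (H x)
          rw [hHsmul, hsemi, hfinv_frob] } with hψ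
    have hψbij : Function.Bijective ψ := hbij.comp hHbij
    have hψmat : LinearMap.toMatrix B B ψ = M := by
      apply Matrix.ext
      intro i j
      rw [LinearMap.toMatrix_apply]
      show B.repr (Φ (H (B j))) i = M i j
      rw [hHB j]
      rfl
    have := LinearEquiv.isUnit_det' (LinearEquiv.ofBijective ψ hψbij)
    have hdet2 : (LinearMap.toMatrix B B ψ).det = LinearMap.det ψ :=
      LinearMap.det_toMatrix B ψ
    rw [hψmat] at hdet2
    rw [hdet2]
    exact this
  -- reduced matrix and semilinear map on residues
  set Mk : Matrix ι ι k := M.map π with hMk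
  have hMkdet : IsUnit Mk.det := by
    have h4 : π M.det = Mk.det := RingHom.map_det π M
    rw [← h4]
    exact hdet.map π
  have hMkdet0 : Mk.det ≠ 0 := hMkdet.ne_zero
  set ψk : (ι → k) →ₛₗ[frobenius k p] (ι → k) :=
    { toFun := fun v => Mk.mulVec (fun j => v j ^ p)
      map_add' := by
        intro v w
        show Mk.mulVec (fun j => (v + w) j ^ p)
          = Mk.mulVec (fun j => v j ^ p) + Mk.mulVec (fun j => w j ^ p)
        have h5 : (fun j => (v + w) j ^ p) = (fun j => v j ^ p) + (fun j => w j ^ p) := by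
          funext j
          show (v j + w j) ^ p = v j ^ p + w j ^ p
          rw [add_pow_char]
        rw [h5, Matrix.mulVec_add]
      map_smul' := by
        intro c v
        show Mk.mulVec (fun j => (c • v) j ^ p)
          = (frobenius k p) c • Mk.mulVec (fun j => v j ^ p)
        have h5 : (fun j => (c • v) j ^ p) = (c ^ p) • (fun j => v j ^ p) := by
          funext j
          show (c * v j) ^ p = c ^ p * v j ^ p
          rw [mul_pow]
        rw [h5, Matrix.mulVec_smul, frobenius_def] } with hψk
  have hψk_def : ∀ v : ι → k, ψk v = Mk.mulVec (fun j => v j ^ p) := fun _ => rfl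
  have hψkbij : Function.Bijective ψk := by
    refine Function.bijective_iff_has_inverse.mpr
      ⟨fun v j => (frobeniusEquiv k p).symm ((Mk⁻¹.mulVec v) j), fun v => ?_, fun v => ?_⟩
    · funext j
      have h6 : Mk⁻¹.mulVec (ψk v) = fun j => v j ^ p := by
        rw [hψk_def, Matrix.mulVec_mulVec, Matrix.nonsing_inv_mul _ hMkdet, Matrix.one_mulVec]
      show (frobeniusEquiv k p).symm ((Mk⁻¹.mulVec (ψk v)) j) = v j
      rw [h6]
      have := (frobeniusEquiv k p).symm_apply_apply (v j)
      rwa [frobeniusEquiv_apply, frobenius_def] at this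
    · show Mk.mulVec (fun j => ((frobeniusEquiv k p).symm ((Mk⁻¹.mulVec v) j)) ^ p) = v
      have h7 : (fun j => ((frobeniusEquiv k p).symm ((Mk⁻¹.mulVec v) j)) ^ p)
          = Mk⁻¹.mulVec v := by
        funext j
        have := (frobeniusEquiv k p).apply_symm_apply ((Mk⁻¹.mulVec v) j)
        rwa [frobeniusEquiv_apply, frobenius_def] at this
      rw [h7, Matrix.mulVec_mulVec, Matrix.mul_nonsing_inv _ hMkdet,
        Matrix.one_mulVec]
  have hcomm : ∀ x : P, ρ (Φ x) = ψk (ρ x) := by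
    intro x
    funext i
    rw [hρ_def, hrepr, map_sum, hψk_def]
    simp only [Matrix.mulVec, dotProduct]
    refine Finset.sum_congr rfl fun j _ => ?_
    rw [map_mul]
    have h6 : π (WittVector.frobenius ((B.repr x) j)) = π ((B.repr x) j) ^ p :=
      constantCoeff_frobenius _
    rw [h6]
    rfl
  -- surjectivity of Φ - 1
  have hstep : ∀ z : P, ∃ w z' : P, z - (Φ w - w) = (p : W) • z' := by
    intro z
    obtain ⟨u, hu⟩ := surj_sub_one ψk hψkbij (ρ z)
    obtain ⟨w, hw⟩ := hρsurj u
    have h8 : ρ (z - (Φ w - w)) = 0 := by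
      rw [map_sub, map_sub, hcomm, hw, hu, sub_self]
    obtain ⟨z', hz'⟩ := hρker _ h8
    exact ⟨w, z', hz'⟩
  choose SW SZ hSWZ using hstep
  have hsurj : ∀ y : P, ∃ x : P, Φ x - x = y := by
    intro y
    set seq : ℕ → P × P := fun n =>
      Nat.rec (⟨0, y⟩ : P × P) (fun n s => (s.1 + (p : W) ^ n • SW s.2, SZ s.2)) n with hseq
    have hseqS : ∀ n, seq (n+1) = ((seq n).1 + (p : W) ^ n • SW (seq n).2, SZ (seq n).2) :=
      fun n => rfl
    have hinvar : ∀ n, y - (Φ (seq n).1 - (seq n).1) = (p : W) ^ n • (seq n).2 := by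
      intro n
      induction n with
      | zero =>
        show y - (Φ 0 - 0) = (p : W) ^ 0 • y
        rw [map_zero, pow_zero, one_smul, sub_zero, sub_zero]
      | succ n ih =>
        rw [hseqS]
        show y - (Φ ((seq n).1 + (p : W) ^ n • SW (seq n).2)
          - ((seq n).1 + (p : W) ^ n • SW (seq n).2)) = (p : W) ^ (n+1) • SZ (seq n).2
        rw [map_add, hΦpow]
        have h9 : y - (Φ (seq n).1 + (p : W) ^ n • Φ (SW (seq n).2)
            - ((seq n).1 + (p : W) ^ n • SW (seq n).2))
            = (y - (Φ (seq n).1 - (seq n).1))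
              - (p : W) ^ n • (Φ (SW (seq n).2) - SW (seq n).2) := by
          rw [smul_sub]; abel
        rw [h9, ih, ← smul_sub]
        have h10 := hSWZ (seq n).2
        have h11 : (seq n).2 - (Φ (SW (seq n).2) - SW (seq n).2) = (p : W) • SZ (seq n).2 := h10
        rw [h11, smul_smul, ← pow_succ]
    have hdiffc : ∀ n i, (p : W) ^ n ∣ B.repr ((seq (n+1)).1) i - B.repr ((seq n).1) i := by
      intro n i
      rw [hseqS]
      show (p : W) ^ n ∣ B.repr ((seq n).1 + (p : W) ^ n • SW (seq n).2) i
        - B.repr ((seq n).1) i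
      rw [map_add, map_smul, Finsupp.add_apply, Finsupp.smul_apply, smul_eq_mul,
        add_sub_cancel_left]
      exact Dvd.intro _ rfl
    choose L hL using fun i : ι =>
      exists_limit (fun n => B.repr ((seq n).1) i) (fun n => hdiffc n i)
    set x : P := ∑ i, L i • B i with hx
    have hxrepr : ∀ i, B.repr x i = L i := fun i => by
      rw [hx]
      exact congrFun (B.repr_sum_self L) i
    have hxd : ∀ n, ∃ u : P, x - (seq n).1 = (p : W) ^ n • u := by
      intro n
      have hdvd : ∀ i, ∃ m : W, L i - B.repr ((seq n).1) i = (p : W) ^ n * m := fun i => hL i n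
      choose m hm using hdvd
      refine ⟨∑ i, m i • B i, ?_⟩
      rw [Finset.smul_sum]
      calc x - (seq n).1 = ∑ i, (B.repr (x - (seq n).1) i) • B i := (B.sum_repr _).symm
      _ = ∑ i, (p : W) ^ n • m i • B i := by
          refine Finset.sum_congr rfl fun i _ => ?_
          rw [map_sub, Finsupp.sub_apply, hxrepr, hm i, smul_smul]
    have hfinal : ∀ n, ∃ u : P, y - (Φ x - x) = (p : W) ^ n • u := by
      intro n
      obtain ⟨u, hu⟩ := hxd n
      refine ⟨(seq n).2 - (Φ u - u), ?_⟩
      have h12 : x = (seq n).1 + (p : W) ^ n • u := by rw [← hu]; abel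
      have h13 : Φ x - x = (Φ (seq n).1 - (seq n).1) + (p : W) ^ n • (Φ u - u) := by
        rw [h12, map_add, hΦpow, smul_sub]; abel
      rw [h13, smul_sub ((p : W) ^ n) ((seq n).2) (Φ u - u), ← hinvar n]
      abel
    refine ⟨x, ?_⟩
    have hz : y - (Φ x - x) = 0 := by
      have h14 : ∀ i, B.repr (y - (Φ x - x)) i = 0 := by
        intro i
        apply eq_zero_of_forall_dvd
        intro n
        obtain ⟨u, hu⟩ := hfinal n
        rw [hu, map_smul, Finsupp.smul_apply, smul_eq_mul]
        exact Dvd.intro _ rfl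
      have h15 : B.repr (y - (Φ x - x)) = 0 := Finsupp.ext h14
      exact (LinearEquiv.map_eq_zero_iff B.repr).mp h15
    rw [← sub_eq_zero]
    rw [← neg_sub y (Φ x - x), hz, neg_zero]
  constructor
  · intro y
    obtain ⟨x, hx⟩ := hsurj y
    exact ⟨x, hx⟩
  -- span of fixed points
  · have hlift : ∀ v : ι → k, ψk v = v → ∃ x : P, Φ x = x ∧ ρ x = v := by
      intro v hv
      obtain ⟨x₀, hx₀⟩ := hρsurj v
      have h16 : ρ (Φ x₀ - x₀) = 0 := by rw [map_sub, hcomm, hx₀, hv, sub_self]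
      obtain ⟨z, hz⟩ := hρker _ h16
      obtain ⟨w, hw⟩ := hsurj (-z)
      have hρpw : ∀ w' : P, ρ ((p : W) • w') = 0 := by
        intro w'
        funext i
        rw [hρ_def, map_smul, Finsupp.smul_apply, smul_eq_mul, map_mul]
        have : π (p : W) = (p : k) := map_natCast π p
        rw [this, CharP.cast_eq_zero k p, zero_mul]
        rfl
      refine ⟨x₀ + (p : W) • w, ?_, ?_⟩
      · rw [map_add, hΦp]
        have h17 : Φ x₀ = x₀ + (p : W) • z := by rw [← hz]; abel
        have h18 : Φ w = w - z := by
          have := sub_eq_iff_eq_add.mp hw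
          rw [this]; abel
        rw [h17, h18, smul_sub]
        abel
      · rw [map_add, hx₀, hρpw, add_zero]
    obtain ⟨s, hs_sub, hs_span, hs_li⟩ := exists_linearIndependent k {v : ι → k | ψk v = v}
    haveI : Fintype s := (hs_li.setFinite).fintype
    have hbV_span : ⊤ ≤ Submodule.span k (Set.range ((↑) : s → (ι → k))) := by
      rw [Subtype.range_coe, hs_span, fixed_span ψk hψkbij]
    set bV : Module.Basis s k (ι → k) := Module.Basis.mk hs_li hbV_span with hbV
    have hcard : Fintype.card ι = Fintype.card s := by
      have h19 : Module.finrank k (ι → k) = Fintype.card s := Module.finrank_eq_card_basis bV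
      rw [Module.finrank_pi] at h19
      exact h19
    set eqv : ι ≃ s := Fintype.equivOfCardEq hcard with heqv
    have hfixv : ∀ j : ι, ψk ((eqv j : ι → k)) = (eqv j : ι → k) := fun j => hs_sub (eqv j).2
    choose xf hxf_fix hxf_rep using fun j : ι => hlift (eqv j) (hfixv j)
    set E : Matrix ι ι W := Matrix.of fun i j => B.repr (xf j) i with hE
    have hEdet : IsUnit E.det := by
      apply isUnit_of_constantCoeff_ne
      have h20 : π E.det = (E.map π).det := RingHom.map_det π E
      show π E.det ≠ 0
      rw [h20]
      have h21 : E.map π = (Pi.basisFun k ι).toMatrix (fun j => (eqv j : ι → k)) := by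
        ext i j
        rw [Module.Basis.toMatrix_apply, Pi.basisFun_repr, Matrix.map_apply]
        show π (B.repr (xf j) i) = (eqv j : ι → k) i
        rw [← hρ_def, hxf_rep]
      have h22 : (fun j => (eqv j : ι → k)) = ⇑(bV.reindex eqv.symm) := by
        funext j
        rw [Module.Basis.reindex_apply, Equiv.symm_symm, hbV, Module.Basis.mk_apply]
      rw [h21, h22]
      haveI := Module.Basis.invertibleToMatrix (Pi.basisFun k ι) (bV.reindex eqv.symm)
      have h23 : IsUnit ((Pi.basisFun k ι).toMatrix ⇑(bV.reindex eqv.symm)).det := by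
        exact (Matrix.isUnit_iff_isUnit_det _).mp
          (isUnit_of_invertible ((Pi.basisFun k ι).toMatrix ⇑(bV.reindex eqv.symm)))
      exact h23.ne_zero
    refine le_antisymm le_top ?_
    intro x _
    set cv : ι → W := fun i => B.repr x i with hcv
    set d : ι → W := (E⁻¹).mulVec cv with hd
    have hEd : E.mulVec d = cv := by
      rw [hd, Matrix.mulVec_mulVec, Matrix.mul_nonsing_inv _ hEdet, Matrix.one_mulVec]
    have hxsum : x = ∑ j, d j • xf j := by
      have h24 : ∀ j, xf j = ∑ i, E i j • B i := fun j => by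
        rw [hE]
        exact (B.sum_repr (xf j)).symm
      calc x = ∑ i, B.repr x i • B i := (B.sum_repr x).symm
      _ = ∑ i, (E.mulVec d i) • B i := by
          refine Finset.sum_congr rfl fun i _ => ?_
          rw [hEd]
      _ = ∑ i, ∑ j, (E i j * d j) • B i := by
          refine Finset.sum_congr rfl fun i _ => ?_
          rw [Matrix.mulVec, dotProduct, Finset.sum_smul]
      _ = ∑ j, ∑ i, (E i j * d j) • B i := Finset.sum_comm
      _ = ∑ j, d j • xf j := by
          refine Finset.sum_congr rfl fun j _ => ?_
          rw [h24 j, Finset.smul_sum]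
          refine Finset.sum_congr rfl fun i _ => ?_
          rw [smul_smul, mul_comm]
    rw [hxsum]
    exact Submodule.sum_mem _ fun j _ =>
      Submodule.smul_mem _ _ (Submodule.subset_span (hxf_fix j))
end

section
/- Let p be a prime, A a commutative ring and 𝔞 ⊆ A an ideal such that A is 𝔞-adically complete and separated and A/𝔞 is a perfect ring of characteristic p. For each n ≥ 1, the quotient A/𝔞ⁿ with the nilpotent ideal 𝔞/𝔞ⁿ satisfies the same hypotheses. Let 𝕎 ⊆ W(A) and, for each n, 𝕎ₙ ⊆ W(A/𝔞ⁿ) be subrings satisfying the three characterizing conditions (stability under Frobenius; intersection with W(𝔞) resp. W(𝔞/𝔞ⁿ) equals Ŵ(𝔞) resp. Ŵ(𝔞/𝔞ⁿ); surjection onto W(A/𝔞)). Then an element x ∈ W(A) lies in 𝕎 if and only if for every n ≥ 1 the image of x in W(A/𝔞ⁿ) lies in 𝕎ₙ; i.e. 𝕎 = lim_n 𝕎ₙ inside W(A) = lim_n W(A/𝔞ⁿ). -/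
/-- A subring `S ⊆ W(B)` satisfies the three characterizing conditions with respect to an
ideal `𝔟 ⊆ B`: stability under Frobenius, `S ∩ W(𝔟) = Ŵ(𝔟)`, and surjection onto
`W(B/𝔟)`. -/
def IsSpecialWittSubring (p : ℕ) [Fact p.Prime] {B : Type*} [CommRing B]
    (𝔟 : Ideal B) (S : Subring (WittVector p B)) : Prop :=
  (∀ x ∈ S, WittVector.frobenius x ∈ S) ∧
  ((S : Set (WittVector p B)) ∩ {x | ∀ n, x.coeff n ∈ 𝔟} =
    {x | (∀ n, x.coeff n ∈ 𝔟) ∧ ∀ k, {n | x.coeff n ∉ 𝔟 ^ k}.Finite}) ∧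
  (∀ y : WittVector p (B ⧸ 𝔟), ∃ x ∈ S, WittVector.map (Ideal.Quotient.mk 𝔟) x = y)

section helpers

open WittVector MvPolynomial

variable {p : ℕ} [Fact p.Prime]


lemma aeval_sub_mem {B : Type*} [CommRing B] (J : Ideal B) (P : MvPolynomial ℕ ℤ)
    (a b : ℕ → B) (h : ∀ i, a i - b i ∈ J) : aeval a P - aeval b P ∈ J := by
  rw [← Ideal.Quotient.eq]
  have key : ∀ c : ℕ → B, Ideal.Quotient.mk J (aeval c P)
      = aeval (fun i => Ideal.Quotient.mk J (c i)) P := fun c =>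
    comp_aeval_apply (f := c) (Ideal.Quotient.mk J).toIntAlgHom P
  rw [key, key]
  have : (fun i => Ideal.Quotient.mk J (a i)) = fun i => Ideal.Quotient.mk J (b i) :=
    funext fun i => Ideal.Quotient.eq.mpr (h i)
  rw [this]

lemma pow_prime_sub_mem {B : Type*} [CommRing B] (𝔟 : Ideal B) (hp : (p : B) ∈ 𝔟)
    (m : ℕ) (hm : 1 ≤ m) (a b : B) (h : a - b ∈ 𝔟 ^ m) : a ^ p - b ^ p ∈ 𝔟 ^ (m + 1) := by
  have hpp : p.Prime := Fact.out
  have ha : a = b + (a - b) := by ring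
  set e := a - b with he
  rw [ha, add_pow, Finset.sum_range_succ]
  simp only [Nat.choose_self, Nat.cast_one, mul_one, Nat.sub_self, pow_zero]
  rw [add_sub_cancel_right]
  refine Ideal.sum_mem _ (fun k hk => ?_)
  rw [Finset.mem_range] at hk
  rcases Nat.eq_zero_or_pos k with hk0 | hk1
  · subst hk0
    simp only [pow_zero, one_mul, Nat.choose_zero_right, Nat.cast_one, mul_one, Nat.sub_zero]
    have : e ^ p ∈ (𝔟 ^ m) ^ p := Ideal.pow_mem_pow h p
    rw [← pow_mul] at this
    exact Ideal.pow_le_pow_right (by nlinarith [hpp.two_le]) this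
  · obtain ⟨c, hc⟩ := hpp.dvd_choose_self (by omega : k ≠ 0) hk  -- p ∣ choose p k
    have h1 : e ^ (p - k) ∈ 𝔟 ^ m := by
      have : e ^ (p - k) = e * e ^ (p - k - 1) := by
        rw [← pow_succ']
        congr 1
        omega
      rw [this]
      exact Ideal.mul_mem_right _ _ h
    have h2 : e ^ (p - k) * (p : B) ∈ 𝔟 ^ (m + 1) := by
      rw [pow_succ]
      exact Ideal.mul_mem_mul h1 hp
    have : b ^ k * e ^ (p - k) * ((p.choose k : ℕ) : B)
        = (b ^ k * (c : B)) * (e ^ (p - k) * (p : B)) := by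
      rw [hc]
      push_cast
      ring
    rw [this]
    exact Ideal.mul_mem_left _ _ h2

lemma coeff_frobenius_sub_mem {B : Type*} [CommRing B] (𝔟 : Ideal B) (hp : (p : B) ∈ 𝔟)
    (m : ℕ) (hm : 1 ≤ m) (u v : WittVector p B)
    (h : ∀ i, u.coeff i - v.coeff i ∈ 𝔟 ^ m) :
    ∀ i, (WittVector.frobenius u).coeff i - (WittVector.frobenius v).coeff i ∈ 𝔟 ^ (m + 1) := by
  intro i
  rw [WittVector.coeff_frobenius, WittVector.coeff_frobenius, WittVector.frobeniusPoly]
  simp only [map_add, map_mul, map_pow, aeval_X, aeval_C, algebraMap_int_eq, Int.coe_castRingHom]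
  have h1 : u.coeff i ^ p - v.coeff i ^ p ∈ 𝔟 ^ (m + 1) :=
    pow_prime_sub_mem 𝔟 hp m hm _ _ (h i)
  have h2 : ((p : ℤ) : B) * aeval u.coeff (WittVector.frobeniusPolyAux p i)
      - ((p : ℤ) : B) * aeval v.coeff (WittVector.frobeniusPolyAux p i) ∈ 𝔟 ^ (m + 1) := by
    rw [← mul_sub]
    have h3 : aeval u.coeff (WittVector.frobeniusPolyAux p i)
        - aeval v.coeff (WittVector.frobeniusPolyAux p i) ∈ 𝔟 ^ m := aeval_sub_mem _ _ _ _ h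
    have : ((p : ℤ) : B) = (p : B) := by push_cast; rfl
    rw [this, pow_succ']
    exact Ideal.mul_mem_mul hp h3
  have := Ideal.add_mem _ h1 h2
  convert this using 1
  ring

lemma map_frobenius' {B C : Type*} [CommRing B] [CommRing C] (g : B →+* C)
    (x : WittVector p B) :
    WittVector.map g (WittVector.frobenius x) = WittVector.frobenius (WittVector.map g x) := by
  ext i
  rw [WittVector.map_coeff, WittVector.coeff_frobenius, WittVector.coeff_frobenius]
  have : (WittVector.map g x).coeff = fun j => g (x.coeff j) := funext fun j => rfl
  rw [this]
  exact comp_aeval_apply (f := x.coeff) g.toIntAlgHom _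

lemma iterate_coeff_sub_mem {B : Type*} [CommRing B] (𝔟 : Ideal B) (hp : (p : B) ∈ 𝔟)
    (u v : WittVector p B) (h : ∀ i, u.coeff i - v.coeff i ∈ 𝔟) (k : ℕ) :
    ∀ i, ((⇑(WittVector.frobenius (p := p) (R := B)))^[k] u).coeff i
      - ((⇑(WittVector.frobenius (p := p) (R := B)))^[k] v).coeff i ∈ 𝔟 ^ (k + 1) := by
  induction k with
  | zero => simpa using h
  | succ k ih =>
      intro i
      rw [Function.iterate_succ_apply', Function.iterate_succ_apply']
      exact coeff_frobenius_sub_mem 𝔟 hp (k + 1) (by omega) _ _ ih i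

lemma map_frobenius_iterate {B C : Type*} [CommRing B] [CommRing C] (g : B →+* C)
    (x : WittVector p B) (k : ℕ) :
    WittVector.map g ((⇑(WittVector.frobenius (p := p) (R := B)))^[k] x)
      = (⇑(WittVector.frobenius (p := p) (R := C)))^[k] (WittVector.map g x) := by
  induction k with
  | zero => rfl
  | succ k ih => rw [Function.iterate_succ_apply', Function.iterate_succ_apply', map_frobenius', ih]

lemma mem_of_frobenius_stable {B : Type*} [CommRing B] (S : Subring (WittVector p B))
    (hS : ∀ x ∈ S, WittVector.frobenius x ∈ S) {x : WittVector p B} (hx : x ∈ S) (k : ℕ) :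
    (⇑(WittVector.frobenius (p := p) (R := B)))^[k] x ∈ S := by
  induction k with
  | zero => exact hx
  | succ k ih => rw [Function.iterate_succ_apply']; exact hS _ ih


lemma key_lemma (p : ℕ) [Fact p.Prime] (A : Type*) [CommRing A] (𝔞 : Ideal A)
    [CharP (A ⧸ 𝔞) p] [PerfectRing (A ⧸ 𝔞) p]
    (𝕎 : Subring (WittVector p A)) (h𝕎 : IsSpecialWittSubring p 𝔞 𝕎)
    (n : ℕ) (hn : 1 ≤ n) (𝕎n : Subring (WittVector p (A ⧸ 𝔞 ^ n)))
    (h𝕎n : IsSpecialWittSubring p (𝔞.map (Ideal.Quotient.mk (𝔞 ^ n))) 𝕎n)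
    (x : WittVector p A) (hx : x ∈ 𝕎) :
    WittVector.map (Ideal.Quotient.mk (𝔞 ^ n)) x ∈ 𝕎n := by
  set B := A ⧸ 𝔞 ^ n with hB
  set 𝔟 : Ideal B := 𝔞.map (Ideal.Quotient.mk (𝔞 ^ n)) with h𝔟
  have hsup : 𝔞 ^ n ⊔ 𝔞 = 𝔞 := sup_eq_right.mpr (Ideal.pow_le_self (by omega))
  let e : (B ⧸ 𝔟) ≃+* A ⧸ 𝔞 :=
    (DoubleQuot.quotQuotEquivQuotSup (𝔞 ^ n) 𝔞).trans (Ideal.quotEquivOfEq hsup)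
  have ecomp : ∀ a : A,
      e (Ideal.Quotient.mk 𝔟 (Ideal.Quotient.mk (𝔞 ^ n) a)) = Ideal.Quotient.mk 𝔞 a := by
    intro a
    show (Ideal.quotEquivOfEq hsup)
      ((DoubleQuot.quotQuotEquivQuotSup (𝔞 ^ n) 𝔞) (DoubleQuot.quotQuotMk (𝔞 ^ n) 𝔞 a)) = _
    rw [DoubleQuot.quotQuotEquivQuotSup_quotQuotMk, Ideal.quotEquivOfEq_mk]
  haveI : CharP (B ⧸ 𝔟) p := charP_of_injective_ringHom (f := e.symm.toRingHom) e.symm.injective p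
  haveI : ExpChar (B ⧸ 𝔟) p := .prime Fact.out
  haveI : PerfectRing (B ⧸ 𝔟) p := by
    refine ⟨?_⟩
    have hfe : (⇑(_root_.frobenius (B ⧸ 𝔟) p) : (B ⧸ 𝔟) → (B ⧸ 𝔟))
        = ⇑e.symm ∘ ⇑(_root_.frobenius (A ⧸ 𝔞) p) ∘ ⇑e := by
      funext w
      simp only [Function.comp_apply, frobenius_def, map_pow, RingEquiv.symm_apply_apply]
    show Function.Bijective (_root_.frobenius (B ⧸ 𝔟) p)
    rw [hfe]
    exact e.symm.bijective.comp (PerfectRing.bijective_frobenius.comp e.bijective)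
  set π : WittVector p A →+* WittVector p B := WittVector.map (Ideal.Quotient.mk (𝔞 ^ n)) with hπ
  set ρB : WittVector p B →+* WittVector p (B ⧸ 𝔟) :=
    WittVector.map (Ideal.Quotient.mk 𝔟) with hρB
  set y : WittVector p (B ⧸ 𝔟) := ρB (π x) with hy
  set z₀ : WittVector p (B ⧸ 𝔟) := (⇑(WittVector.frobeniusEquiv p (B ⧸ 𝔟)).symm)^[n] y with hz₀
  have itfrob : ∀ (m : ℕ) (w : WittVector p (B ⧸ 𝔟)),
      (⇑(WittVector.frobenius (p := p) (R := B ⧸ 𝔟)))^[m]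
        ((⇑(WittVector.frobeniusEquiv p (B ⧸ 𝔟)).symm)^[m] w) = w := by
    intro m
    induction m with
    | zero => intro w; rfl
    | succ m ih =>
        intro w
        rw [Function.iterate_succ_apply' (f := ⇑(WittVector.frobeniusEquiv p (B ⧸ 𝔟)).symm),
          Function.iterate_succ_apply (f := ⇑(WittVector.frobenius (p := p) (R := B ⧸ 𝔟)))]
        have : WittVector.frobenius ((WittVector.frobeniusEquiv p (B ⧸ 𝔟)).symm
            ((⇑(WittVector.frobeniusEquiv p (B ⧸ 𝔟)).symm)^[m] w))
            = (⇑(WittVector.frobeniusEquiv p (B ⧸ 𝔟)).symm)^[m] w := by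
          rw [← WittVector.frobeniusEquiv_apply]
          exact (WittVector.frobeniusEquiv p (B ⧸ 𝔟)).apply_symm_apply _
        rw [this, ih]
  have hfz₀ : (⇑(WittVector.frobenius (p := p) (R := B ⧸ 𝔟)))^[n] z₀ = y := itfrob n y
  obtain ⟨u, hu𝕎, hu⟩ := h𝕎.2.2 (WittVector.map (e : (B ⧸ 𝔟) →+* (A ⧸ 𝔞)) z₀)
  obtain ⟨z, hz𝕎, hz⟩ := h𝕎n.2.2 z₀
  have hcoeff : ∀ i, (π u).coeff i - z.coeff i ∈ 𝔟 := by
    intro i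
    rw [← Ideal.Quotient.eq]
    have h1 : Ideal.Quotient.mk 𝔟 ((π u).coeff i) = z₀.coeff i := by
      apply e.injective
      have h1a := congrArg (fun w => w.coeff i) hu
      simp only [WittVector.map_coeff] at h1a
      rw [hπ, WittVector.map_coeff, ecomp]
      exact h1a
    have h2 : Ideal.Quotient.mk 𝔟 (z.coeff i) = z₀.coeff i := by
      have h2a := congrArg (fun w => w.coeff i) hz
      simpa only [WittVector.map_coeff] using h2a
    rw [h1, h2]
  have hpB : (p : B) ∈ 𝔟 := by
    have h3 : (Ideal.Quotient.mk 𝔟 (p : B)) = 0 := by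
      rw [map_natCast]
      exact CharP.cast_eq_zero (B ⧸ 𝔟) p
    exact Ideal.Quotient.eq_zero_iff_mem.mp h3
  have h𝔟n : 𝔟 ^ n = ⊥ := by
    rw [h𝔟, ← Ideal.map_pow, Ideal.map_quotient_self]
  have heq : (⇑(WittVector.frobenius (p := p) (R := B)))^[n] (π u)
      = (⇑(WittVector.frobenius (p := p) (R := B)))^[n] z := by
    ext i
    have hmem := iterate_coeff_sub_mem 𝔟 hpB (π u) z hcoeff n i
    have hle : (𝔟 : Ideal B) ^ (n + 1) ≤ ⊥ := by
      rw [← h𝔟n]; exact Ideal.pow_le_pow_right (by omega)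
    have h0 := hle hmem
    rw [Ideal.mem_bot] at h0
    exact sub_eq_zero.mp h0
  set u' := (⇑(WittVector.frobenius (p := p) (R := A)))^[n] u with hu'def
  have hπu' : π u' ∈ 𝕎n := by
    rw [hu'def, hπ, map_frobenius_iterate, heq]
    exact mem_of_frobenius_stable _ h𝕎n.1 hz𝕎 n
  have hu'𝕎 : u' ∈ 𝕎 := mem_of_frobenius_stable _ h𝕎.1 hu𝕎 n
  set d := x - u' with hd
  have hd𝕎 : d ∈ 𝕎 := sub_mem hx hu'𝕎
  have hxmap : WittVector.map (Ideal.Quotient.mk 𝔞) x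
      = WittVector.map (e : (B ⧸ 𝔟) →+* (A ⧸ 𝔞)) y := by
    ext i
    have hyc : y.coeff i = Ideal.Quotient.mk 𝔟 (Ideal.Quotient.mk (𝔞 ^ n) (x.coeff i)) := by
      rw [hy, hρB, hπ, WittVector.map_coeff, WittVector.map_coeff]
    rw [WittVector.map_coeff, WittVector.map_coeff, hyc]
    exact (ecomp (x.coeff i)).symm
  have hu'map : WittVector.map (Ideal.Quotient.mk 𝔞) u'
      = WittVector.map (e : (B ⧸ 𝔟) →+* (A ⧸ 𝔞)) y := by
    rw [hu'def, map_frobenius_iterate, hu, ← map_frobenius_iterate, hfz₀]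
  have hdcoeff : ∀ i, d.coeff i ∈ 𝔞 := by
    intro i
    have hmap : WittVector.map (Ideal.Quotient.mk 𝔞) d = 0 := by
      rw [hd, map_sub, hxmap, hu'map, sub_self]
    have := congrArg (fun w => w.coeff i) hmap
    simp only [WittVector.map_coeff, WittVector.zero_coeff] at this
    exact Ideal.Quotient.eq_zero_iff_mem.mp this
  have hfin : ∀ k, {i | d.coeff i ∉ 𝔞 ^ k}.Finite := by
    have hmem : d ∈ (↑𝕎 : Set (WittVector p A)) ∩ {x | ∀ i, x.coeff i ∈ 𝔞} := ⟨hd𝕎, hdcoeff⟩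
    rw [h𝕎.2.1] at hmem
    exact hmem.2
  have hπd : π d ∈ 𝕎n := by
    have hmem : π d ∈ {x : WittVector p B |
        (∀ i, x.coeff i ∈ 𝔟) ∧ ∀ k, {i | x.coeff i ∉ 𝔟 ^ k}.Finite} := by
      constructor
      · intro i
        rw [hπ, WittVector.map_coeff]
        exact Ideal.mem_map_of_mem _ (hdcoeff i)
      · intro k
        refine (hfin k).subset ?_
        intro i hi
        simp only [Set.mem_setOf_eq] at hi ⊢
        intro hak
        refine hi ?_
        rw [hπ, WittVector.map_coeff, h𝔟, ← Ideal.map_pow]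
        exact Ideal.mem_map_of_mem _ hak
    rw [← h𝕎n.2.1] at hmem
    exact hmem.1
  have hsplit : π x = π d + π u' := by
    rw [hd, map_sub]; ring
  show π x ∈ 𝕎n
  rw [hsplit]
  exact add_mem hπd hπu'

end helpers

/-- With `A` admissible for `𝔞`, let `𝕎 ⊆ W(A)` and, for each `n ≥ 1`,
`𝕎ₙ ⊆ W(A/𝔞ⁿ)` be subrings satisfying the three characterizing conditions (with respect
to `𝔞` resp. `𝔞/𝔞ⁿ`).  Then `x ∈ 𝕎` iff for every `n ≥ 1` the image of `x` in
`W(A/𝔞ⁿ)` lies in `𝕎ₙ`; i.e. `𝕎 = lim_n 𝕎ₙ`. -/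
theorem special_subring_eq_limit
    (p : ℕ) [Fact p.Prime] (A : Type*) [CommRing A] (𝔞 : Ideal A)
    [IsAdicComplete 𝔞 A] [CharP (A ⧸ 𝔞) p] [PerfectRing (A ⧸ 𝔞) p]
    (𝕎 : Subring (WittVector p A))
    (h𝕎 : IsSpecialWittSubring p 𝔞 𝕎)
    (𝕎ₙ : ∀ n : ℕ, Subring (WittVector p (A ⧸ 𝔞 ^ n)))
    (h𝕎ₙ : ∀ n : ℕ, 1 ≤ n →
      IsSpecialWittSubring p (𝔞.map (Ideal.Quotient.mk (𝔞 ^ n))) (𝕎ₙ n)) :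
    ∀ x : WittVector p A, x ∈ 𝕎 ↔
      ∀ n : ℕ, 1 ≤ n →
        WittVector.map (Ideal.Quotient.mk (𝔞 ^ n)) x ∈ 𝕎ₙ n := by
  intro x
  constructor
  · intro hx n hn
    exact key_lemma p A 𝔞 𝕎 h𝕎 n hn (𝕎ₙ n) (h𝕎ₙ n hn) x hx
  · intro hall
    obtain ⟨u, hu𝕎, hu⟩ := h𝕎.2.2 (WittVector.map (Ideal.Quotient.mk 𝔞) x)
    set d := x - u with hd
    have hdcoeff : ∀ i, d.coeff i ∈ 𝔞 := by
      intro i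
      have h0 : WittVector.map (Ideal.Quotient.mk 𝔞) d = 0 := by
        rw [hd, map_sub, hu, sub_self]
      have h1 := congrArg (fun w => w.coeff i) h0
      simp only [WittVector.map_coeff, WittVector.zero_coeff] at h1
      exact Ideal.Quotient.eq_zero_iff_mem.mp h1
    have hfin : ∀ k, {i | d.coeff i ∉ 𝔞 ^ k}.Finite := by
      intro k
      rcases Nat.eq_zero_or_pos k with hk | hk
      · subst hk
        convert Set.finite_empty
        ext i
        simp [Ideal.one_eq_top]
      · have hπd : WittVector.map (Ideal.Quotient.mk (𝔞 ^ k)) d ∈ 𝕎ₙ k := by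
          rw [hd, map_sub]
          exact sub_mem (hall k hk) (key_lemma p A 𝔞 𝕎 h𝕎 k hk (𝕎ₙ k) (h𝕎ₙ k hk) u hu𝕎)
        have hmem : WittVector.map (Ideal.Quotient.mk (𝔞 ^ k)) d ∈
            (↑(𝕎ₙ k) : Set (WittVector p (A ⧸ 𝔞 ^ k)))
              ∩ {x | ∀ i, x.coeff i ∈ 𝔞.map (Ideal.Quotient.mk (𝔞 ^ k))} :=
          ⟨hπd, fun i => by
            rw [WittVector.map_coeff]; exact Ideal.mem_map_of_mem _ (hdcoeff i)⟩
        rw [(h𝕎ₙ k hk).2.1] at hmem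
        refine (hmem.2 k).subset ?_
        intro i hi
        simp only [Set.mem_setOf_eq] at hi ⊢
        intro hbk
        refine hi ?_
        rw [WittVector.map_coeff, ← Ideal.map_pow] at hbk
        exact (Ideal.mem_quotient_iff_mem le_rfl).mp hbk
    have hd𝕎 : d ∈ 𝕎 := by
      have hmem : d ∈ {x : WittVector p A |
          (∀ i, x.coeff i ∈ 𝔞) ∧ ∀ k, {i | x.coeff i ∉ 𝔞 ^ k}.Finite} := ⟨hdcoeff, hfin⟩
      rw [← h𝕎.2.1] at hmem
      exact hmem.1
    have hx : x = u + d := by rw [hd]; ring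
    rw [hx]
    exact add_mem hu𝕎 hd𝕎
end

section
/- Let p be a prime and A a perfect ring of characteristic p (pA = 0 and a ↦ a^p bijective on A). Then W(A) is p-adically complete and separated: the natural map W(A) → lim_n W(A)/pⁿW(A) is bijective. -/
open WittVector

variable {p : ℕ} [hp : Fact p.Prime]

section aux

variable {k : Type*} [CommRing k] [CharP k p]

theorem witt_mul_pow_charP (y : WittVector p k) (n : ℕ) :
    y * (p : WittVector p k) ^ n = verschiebung^[n] (frobenius^[n] y) := by
  induction n generalizing y with
  | zero => simp
  | succ n ih =>
    rw [pow_succ', ← mul_assoc, ih (y * p), ← WittVector.verschiebung_frobenius y,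
      ← (WittVector.verschiebung_frobenius_comm.iterate_right n) (WittVector.frobenius y),
      Function.iterate_succ_apply, Function.iterate_succ_apply]

theorem witt_iterate_verschiebung_coeff_eq_zero (z : WittVector p k) {n i : ℕ} (hi : i < n) :
    (verschiebung^[n] z).coeff i = 0 := by
  induction n generalizing i with
  | zero => omega
  | succ n ih =>
    rw [Function.iterate_succ_apply']
    cases i with
    | zero => exact WittVector.verschiebung_coeff_zero _
    | succ i =>
      rw [WittVector.verschiebung_coeff_succ]
      exact ih (by omega)

theorem witt_mem_span_pow_iff [PerfectRing k p] (x : WittVector p k) (n : ℕ) :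
    x ∈ Ideal.span {(p : WittVector p k)} ^ n ↔ ∀ i < n, x.coeff i = 0 := by
  rw [Ideal.span_singleton_pow, Ideal.mem_span_singleton]
  constructor
  · rintro ⟨y, rfl⟩
    intro i hi
    rw [mul_comm, witt_mul_pow_charP]
    exact witt_iterate_verschiebung_coeff_eq_zero _ hi
  · intro h
    obtain ⟨z, hz⟩ := (frobenius_bijective p k).surjective.iterate n
      (WittVector.mk' (fun j => x.coeff (j + n)))
    refine ⟨z, ?_⟩
    rw [mul_comm, witt_mul_pow_charP, hz]
    ext i
    rcases lt_or_ge i n with hi | hi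
    · rw [witt_iterate_verschiebung_coeff_eq_zero _ hi, h i hi]
    · obtain ⟨j, rfl⟩ := Nat.exists_eq_add_of_le' hi
      rw [WittVector.iterate_verschiebung_coeff]

end aux

/-- Let `p` be a prime and `A` a perfect ring of characteristic `p`.
Then `W(A)` is `p`-adically complete and separated. -/
theorem wittVector_p_adically_complete
    (p : ℕ) [Fact p.Prime] (A : Type*) [CommRing A] [CharP A p] [PerfectRing A p] :
    IsAdicComplete (Ideal.span {(p : WittVector p A)}) (WittVector p A) := by
  haveI h1 : IsHausdorff (Ideal.span {(p : WittVector p A)}) (WittVector p A) := by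
    constructor
    intro x hx
    ext i
    have := hx (i + 1)
    rw [SModEq.zero, smul_eq_mul, Ideal.mul_top, witt_mem_span_pow_iff] at this
    simpa using this i (by omega)
  haveI h2 : IsPrecomplete (Ideal.span {(p : WittVector p A)}) (WittVector p A) := by
    constructor
    intro f hf
    refine ⟨WittVector.mk' (fun i => (f (i + 1)).coeff i), fun n => ?_⟩
    rw [SModEq.sub_mem, smul_eq_mul, Ideal.mul_top, witt_mem_span_pow_iff]
    have key : ∀ i < n, (f n).coeff i = (f (i + 1)).coeff i := by
      intro i hi
      have h := hf (show i + 1 ≤ n by omega)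
      rw [SModEq.sub_mem, smul_eq_mul, Ideal.mul_top, witt_mem_span_pow_iff] at h
      have h1 : f (i + 1) - f n ∈ RingHom.ker (WittVector.truncate (i + 1)) :=
        (WittVector.mem_ker_truncate _ _).mpr h
      rw [RingHom.mem_ker, map_sub, sub_eq_zero] at h1
      have := congrArg (fun z => TruncatedWittVector.coeff (Fin.mk i (by omega)) z) h1
      simpa using this.symm
    have h3 : f n - WittVector.mk' (fun i => (f (i + 1)).coeff i) ∈
        RingHom.ker (WittVector.truncate n) := by
      rw [RingHom.mem_ker, map_sub, sub_eq_zero]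
      ext j
      simp only [WittVector.coeff_truncate, WittVector.truncate_mk',
        TruncatedWittVector.coeff_mk]
      exact key j j.isLt
    exact (WittVector.mem_ker_truncate _ _).mp h3
  exact ⟨⟩
end

section
/- Let p be a prime and A a commutative ring. If 𝔞 and 𝔟 are ideals of A and x, y ∈ W(A) are Witt vectors such that every component of x lies in 𝔞 and every component of y lies in 𝔟, then every component of the product x·y lies in the product ideal 𝔞𝔟. Consequently, if 𝔞 is a nilpotent ideal with 𝔞^N = 0, then every product of N Witt vectors all of whose components lie in 𝔞 is zero; in particular W(𝔞) is a nilpotent ideal of W(A). -/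
open MvPolynomial

/-- If evaluating `P` with all variables in `S` sent to `0` (and others to themselves)
gives `0`, then every monomial in the support of `P` involves a variable from `S`. -/
lemma kill_support_aux {σ : Type*} (S : Set σ) (g : σ → MvPolynomial σ ℤ)
    (hg0 : ∀ v ∈ S, g v = 0) (hg1 : ∀ v ∉ S, g v = X v)
    (P : MvPolynomial σ ℤ) (h : aeval g P = 0) :
    ∀ d ∈ P.support, ∃ v ∈ S, d v ≠ 0 := by
  classical
  have hP : aeval g P = ∑ d' ∈ P.support, aeval g (monomial d' (P.coeff d')) := by
    conv_lhs => rw [P.as_sum]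
    rw [map_sum]
  intro d hd
  by_contra hc
  push_neg at hc
  have key : ∀ d' : σ →₀ ℕ,
      coeff d (aeval g (monomial d' (P.coeff d'))) = if d' = d then P.coeff d' else 0 := by
    intro d'
    by_cases hS : ∃ v ∈ S, d' v ≠ 0
    · obtain ⟨v₀, hv₀S, hv₀⟩ := hS
      have hd'd : d' ≠ d := by
        rintro rfl
        exact hv₀ (hc v₀ hv₀S)
      have : aeval g (monomial d' (P.coeff d')) = 0 := by
        rw [aeval_monomial]
        have : (d'.prod fun v k => g v ^ k) = 0 := by
          apply Finset.prod_eq_zero (Finsupp.mem_support_iff.2 hv₀)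
          show g v₀ ^ d' v₀ = 0
          rw [hg0 v₀ hv₀S, zero_pow hv₀]
        rw [this, mul_zero]
      rw [this, coeff_zero, if_neg hd'd]
    · push_neg at hS
      have : aeval g (monomial d' (P.coeff d')) = monomial d' (P.coeff d') := by
        rw [aeval_monomial, monomial_eq]
        have hpr : (d'.prod fun v k => g v ^ k) =
            d'.prod fun v k => (X v : MvPolynomial σ ℤ) ^ k := by
          apply Finsupp.prod_congr
          intro v hv
          rw [hg1 v fun hvS => Finsupp.mem_support_iff.1 hv (hS v hvS)]
        rw [hpr, algebraMap_eq]
      rw [this, coeff_monomial]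
  rw [hP] at h
  have h0 := congrArg (coeff d) h
  rw [MvPolynomial.coeff_sum, coeff_zero,
    Finset.sum_congr rfl (fun d' _ => key d'),
    Finset.sum_ite_eq' P.support d (fun d' => P.coeff d'), if_pos hd] at h0
  exact MvPolynomial.mem_support_iff.1 hd h0

/-- Evaluating a polynomial whose every monomial involves a variable from `S₀`
(with value in `𝔞`) and a variable from `S₁` (with value in `𝔟`) lands in `𝔞 * 𝔟`. -/
lemma aeval_mem_mul {σ : Type*} {A : Type*} [CommRing A] (𝔞 𝔟 : Ideal A)
    (S₀ S₁ : Set σ) (hdis : ∀ v, v ∈ S₀ → v ∉ S₁) (a : σ → A)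
    (ha : ∀ v ∈ S₀, a v ∈ 𝔞) (hb : ∀ v ∈ S₁, a v ∈ 𝔟)
    (P : MvPolynomial σ ℤ)
    (h₀ : ∀ d ∈ P.support, ∃ v ∈ S₀, d v ≠ 0)
    (h₁ : ∀ d ∈ P.support, ∃ v ∈ S₁, d v ≠ 0) :
    aeval a P ∈ 𝔞 * 𝔟 := by
  classical
  have hP : aeval a P = ∑ d ∈ P.support, aeval a (monomial d (P.coeff d)) := by
    conv_lhs => rw [P.as_sum]
    rw [map_sum]
  rw [hP]
  apply Submodule.sum_mem
  intro d hd
  obtain ⟨v₀, hv₀S, hv₀⟩ := h₀ d hd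
  obtain ⟨v₁, hv₁S, hv₁⟩ := h₁ d hd
  have hne : v₁ ≠ v₀ := fun h => hdis v₀ hv₀S (h ▸ hv₁S)
  have hv₀m : v₀ ∈ d.support := Finsupp.mem_support_iff.2 hv₀
  have hv₁m : v₁ ∈ d.support.erase v₀ := Finset.mem_erase.2 ⟨hne, Finsupp.mem_support_iff.2 hv₁⟩
  rw [aeval_monomial]
  have hprod : (d.prod fun v k => a v ^ k) =
      a v₀ ^ d v₀ * (a v₁ ^ d v₁ * ∏ v ∈ (d.support.erase v₀).erase v₁, a v ^ d v) := by
    rw [Finsupp.prod, ← Finset.mul_prod_erase _ _ hv₀m, ← Finset.mul_prod_erase _ _ hv₁m]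
  rw [hprod]
  apply Ideal.mul_mem_left
  rw [← mul_assoc]
  apply Ideal.mul_mem_right
  exact Ideal.mul_mem_mul (𝔞.pow_mem_of_mem (ha v₀ hv₀S) _ (Nat.pos_of_ne_zero hv₀))
    (𝔟.pow_mem_of_mem (hb v₁ hv₁S) _ (Nat.pos_of_ne_zero hv₁))

lemma wittMul_support_side0 (p : ℕ) [Fact p.Prime] (n : ℕ) :
    ∀ d ∈ (WittVector.wittMul p n).support, ∃ v ∈ {v : Fin 2 × ℕ | v.1 = 0}, d v ≠ 0 := by
  classical
  set 𝕄 := MvPolynomial (Fin 2 × ℕ) ℤ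
  let y : WittVector p 𝕄 := WittVector.mk p fun j => X ((1 : Fin 2), j)
  apply kill_support_aux _ (Function.uncurry ![(0 : WittVector p 𝕄).coeff, y.coeff])
  · rintro ⟨v1, v2⟩ (hv : v1 = 0)
    subst hv
    simp [Function.uncurry]
  · rintro ⟨v1, v2⟩ hv
    fin_cases v1
    · simp at hv
    · simp [Function.uncurry, y, WittVector.coeff_mk]
  · have h0 : ((0 : WittVector p 𝕄) * y).coeff n = 0 := by
      rw [zero_mul, WittVector.zero_coeff]
    rw [WittVector.mul_coeff] at h0
    exact h0

lemma wittMul_support_side1 (p : ℕ) [Fact p.Prime] (n : ℕ) :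
    ∀ d ∈ (WittVector.wittMul p n).support, ∃ v ∈ {v : Fin 2 × ℕ | v.1 = 1}, d v ≠ 0 := by
  classical
  set 𝕄 := MvPolynomial (Fin 2 × ℕ) ℤ
  let x : WittVector p 𝕄 := WittVector.mk p fun j => X ((0 : Fin 2), j)
  apply kill_support_aux _ (Function.uncurry ![x.coeff, (0 : WittVector p 𝕄).coeff])
  · rintro ⟨v1, v2⟩ (hv : v1 = 1)
    subst hv
    simp [Function.uncurry]
  · rintro ⟨v1, v2⟩ hv
    fin_cases v1
    · simp [Function.uncurry, x, WittVector.coeff_mk]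
    · simp at hv
  · have h0 : (x * (0 : WittVector p 𝕄)).coeff n = 0 := by
      rw [mul_zero, WittVector.zero_coeff]
    rw [WittVector.mul_coeff] at h0
    exact h0

lemma wittVector_mul_coeff_mem (p : ℕ) [Fact p.Prime] {A : Type*} [CommRing A]
    (𝔞 𝔟 : Ideal A) (x y : WittVector p A)
    (hx : ∀ n, x.coeff n ∈ 𝔞) (hy : ∀ n, y.coeff n ∈ 𝔟) (n : ℕ) :
    (x * y).coeff n ∈ 𝔞 * 𝔟 := by
  rw [WittVector.mul_coeff, WittVector.peval]
  apply aeval_mem_mul 𝔞 𝔟 {v : Fin 2 × ℕ | v.1 = 0} {v : Fin 2 × ℕ | v.1 = 1}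
  · rintro ⟨v1, v2⟩ h0 h1
    simp only [Set.mem_setOf_eq] at h0 h1
    rw [h0] at h1
    exact absurd h1 (by decide)
  · rintro ⟨v1, v2⟩ hv
    simp only [Set.mem_setOf_eq] at hv
    subst hv
    simpa [Function.uncurry] using hx v2
  · rintro ⟨v1, v2⟩ hv
    simp only [Set.mem_setOf_eq] at hv
    subst hv
    simpa [Function.uncurry] using hy v2
  · exact wittMul_support_side0 p n
  · exact wittMul_support_side1 p n

lemma wittVector_prod_coeff_mem (p : ℕ) [Fact p.Prime] {A : Type*} [CommRing A]
    (𝔞 : Ideal A) : ∀ (N : ℕ) (f : Fin N → WittVector p A),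
    (∀ i n, (f i).coeff n ∈ 𝔞) → ∀ n, (∏ i, f i).coeff n ∈ 𝔞 ^ N := by
  intro N
  induction N with
  | zero => intro f _ n; simp
  | succ N ih =>
    intro f hf n
    rw [Fin.prod_univ_succ, pow_succ']
    exact wittVector_mul_coeff_mem p 𝔞 (𝔞 ^ N) _ _ (hf 0)
      (ih (fun i => f i.succ) (fun i m => hf i.succ m)) n

/-- If all components of `x` lie in `𝔞` and all components of `y` lie
in `𝔟`, then all components of `x·y` lie in `𝔞𝔟`.  Consequently, if `𝔞 ^ N = 0`, then
any product of `N` Witt vectors with components in `𝔞` is zero; in particular `W(𝔞)` is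
a nilpotent ideal of `W(A)`. -/
theorem wittVector_mul_coeff_mem_and_nilpotent
    (p : ℕ) [Fact p.Prime] (A : Type*) [CommRing A] :
    (∀ (𝔞 𝔟 : Ideal A) (x y : WittVector p A),
      (∀ n, x.coeff n ∈ 𝔞) → (∀ n, y.coeff n ∈ 𝔟) →
      ∀ n, (x * y).coeff n ∈ 𝔞 * 𝔟) ∧
    (∀ (𝔞 : Ideal A) (N : ℕ), 𝔞 ^ N = ⊥ →
      ∀ f : Fin N → WittVector p A,
        (∀ i n, (f i).coeff n ∈ 𝔞) → ∏ i, f i = 0) := by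
  constructor
  · exact fun 𝔞 𝔟 x y hx hy n => wittVector_mul_coeff_mem p 𝔞 𝔟 x y hx hy n
  · intro 𝔞 N hN f hf
    ext n
    rw [WittVector.zero_coeff]
    have := wittVector_prod_coeff_mem p 𝔞 N f hf n
    rw [hN] at this
    exact Ideal.mem_bot.1 this
end
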